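/- arXiv:2208.08385 — 3 statements merged into one kernel-verified Lean document; each statement's English description precedes it below -/
import Mathlib

section
/- If α is a ∥·∥₁-dominating normalized gauge norm on measurable functions on the unit circle, f ∈ L^α and h ∈ L^{α'} (where α' is the dual norm of α), then the product fh is integrable and ∥fh∥₁ ≤ α(f)·α'(h). -/
open MeasureTheory Complex Filter Finset
open scoped ENNReal NNReal Topology

noncomputable section

/-- `μ` is a rotation-invariant probability measure supported on the unit circle in `ℂ`
(the normalized Lebesgue measure on `𝕋`). -/
def OnCircle (μ : Measure ℂ) : Prop :=
  IsProbabilityMeasure μ ∧ μ ((Metric.sphere (0 : ℂ) 1)ᶜ) = 0 ∧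
    ∀ w : ℂ, ‖w‖ = 1 → Measure.map (fun z => w * z) μ = μ

/-- A `‖·‖₁`-dominating normalized gauge norm, extended to all measurable functions. -/
structure GaugeNorm (μ : Measure ℂ) where
  α : (ℂ → ℂ) → ℝ≥0∞
  norm_one : α (fun _ => 1) = 1
  abs_eq : ∀ f : ℂ → ℂ, α (fun z => ((‖f z‖ : ℝ) : ℂ)) = α f
  dominates : ∀ f : ℂ → ℂ, MemLp f ⊤ μ → ∫⁻ z, ‖f z‖₊ ∂μ ≤ α f
  finite_on_bdd : ∀ f : ℂ → ℂ, MemLp f ⊤ μ → α f < ⊤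
  add_le : ∀ f g : ℂ → ℂ, α (f + g) ≤ α f + α g
  smul_eq : ∀ (c : ℂ) (f : ℂ → ℂ), α (fun z => c * f z) = (‖c‖₊ : ℝ≥0∞) * α f
  ae_eq : ∀ f g : ℂ → ℂ, f =ᵐ[μ] g → α f = α g
  eq_sup_simple : ∀ f : ℂ → ℂ, AEMeasurable f μ →
    α f = ⨆ (s : SimpleFunc ℂ ℝ) (_ : ∀ z, 0 ≤ s z ∧ s z ≤ ‖f z‖),
      α (fun z => ((s z : ℝ) : ℂ))

/-- The gauge norm `α` is continuous: `α(χ_E) → 0` as `μ E → 0⁺`. -/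
def GaugeNorm.IsContinuous {μ : Measure ℂ} (N : GaugeNorm μ) : Prop :=
  ∀ ε : ℝ≥0∞, 0 < ε → ∃ δ : ℝ≥0∞, 0 < δ ∧
    ∀ E : Set ℂ, MeasurableSet E → μ E < δ →
      N.α (Set.indicator E fun _ => 1) < ε

/-- The gauge norm is rotationally symmetric. -/
def GaugeNorm.IsRotSym {μ : Measure ℂ} (N : GaugeNorm μ) : Prop :=
  ∀ (f : ℂ → ℂ) (w : ℂ), ‖w‖ = 1 →
    N.α (fun z => f ((starRingEnd ℂ) w * z)) = N.α f

/-- `α`-closure of a set of functions. -/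
def aClosure {μ : Measure ℂ} (N : GaugeNorm μ) (S : Set (ℂ → ℂ)) : Set (ℂ → ℂ) :=
  {f | ∀ ε : ℝ≥0∞, 0 < ε → ∃ g ∈ S, N.α (f - g) < ε}

/-- Membership in `H^∞`: essentially bounded with vanishing negative Fourier coefficients
(`z^{-n} = z̄^n = z^n` pairing on the circle: coefficient `⟨f, z^{-n}⟩ = ∫ f(z) zⁿ dμ` for `n > 0`). -/
def MemHinf (μ : Measure ℂ) (f : ℂ → ℂ) : Prop :=
  MemLp f ⊤ μ ∧ ∀ n : ℕ, 0 < n → ∫ z, f z * z ^ n ∂μ = 0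

/-- The Hardy space `H^α`: the `α`-closure of `H^∞`. -/
def Halpha {μ : Measure ℂ} (N : GaugeNorm μ) : Set (ℂ → ℂ) :=
  {f | AEMeasurable f μ ∧ f ∈ aClosure N {g | MemHinf μ g}}

/-- Finite Blaschke product with zeros `a 0, …, a (n-1)`. -/
def blaschke {n : ℕ} (a : Fin n → ℂ) : ℂ → ℂ :=
  fun z => ∏ i, (z - a i) / (1 - (starRingEnd ℂ) (a i) * z)

/-- `H^∞(B) = {f ∘ B : f ∈ H^∞}` (up to a.e. equality). -/
def HinfB (μ : Measure ℂ) (B : ℂ → ℂ) : Set (ℂ → ℂ) :=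
  {g | ∃ f : ℂ → ℂ, MemHinf μ f ∧ g =ᵐ[μ] f ∘ B}

/-- `M_α(B)`: the `α`-closure of `H^∞(B)`. -/
def Malpha {μ : Measure ℂ} (N : GaugeNorm μ) (B : ℂ → ℂ) : Set (ℂ → ℂ) :=
  {f | AEMeasurable f μ ∧ f ∈ aClosure N (HinfB μ B)}

/-- A linear subspace of functions. -/
def IsSubspace (M : Set (ℂ → ℂ)) : Prop :=
  (fun _ => 0) ∈ M ∧ (∀ f ∈ M, ∀ g ∈ M, f + g ∈ M) ∧
    ∀ (c : ℂ), ∀ f ∈ M, (fun z => c * f z) ∈ M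

/-- An `α`-closed linear subspace of `H^α`. -/
def IsClosedSubspace {μ : Measure ℂ} (N : GaugeNorm μ) (M : Set (ℂ → ℂ)) : Prop :=
  IsSubspace M ∧ M ⊆ Halpha N ∧ ∀ f ∈ Halpha N, f ∈ aClosure N M → f ∈ M

/-- `φ` is `B`-inner: `{Bᵐφ : m ≥ 0}` is orthonormal in `H²`. -/
def BInner (μ : Measure ℂ) (B φ : ℂ → ℂ) : Prop :=
  MemHinf μ φ ∧ ∀ m k : ℕ,
    ∫ z, (B z ^ m * φ z) * (starRingEnd ℂ) (B z ^ k * φ z) ∂μ =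
      if m = k then 1 else 0

/-- `J₁,…,J_r` form a `B`-inner family: `{Bᵐ J i}` is orthonormal in `H²`. -/
def BInnerFamily (μ : Measure ℂ) (B : ℂ → ℂ) {r : ℕ} (J : Fin r → ℂ → ℂ) : Prop :=
  (∀ i, MemHinf μ (J i)) ∧ ∀ (i j : Fin r) (m k : ℕ),
    ∫ z, (B z ^ m * J i z) * (starRingEnd ℂ) (B z ^ k * J j z) ∂μ =
      if i = j ∧ m = k then 1 else 0

/-- Weak*-closure with respect to the pairing with `L¹` functions. -/
def wstarClosure (μ : Measure ℂ) (S : Set (ℂ → ℂ)) : Set (ℂ → ℂ) :=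
  {f | ∀ ε : ℝ, 0 < ε → ∀ (k : ℕ) (h : Fin k → ℂ → ℂ),
      (∀ i, Integrable (h i) μ) →
      ∃ g ∈ S, ∀ i, ‖∫ z, (f z - g z) * h i z ∂μ‖ < ε}

/-- `M` is weak*-closed (as a subset of `L^∞`). -/
def WeakStarClosedIn (μ : Measure ℂ) (M : Set (ℂ → ℂ)) : Prop :=
  ∀ f : ℂ → ℂ, MemLp f ⊤ μ → f ∈ wstarClosure μ M → f ∈ M

/-- An inner function: `|J| = 1` a.e. -/
def IsInnerF (μ : Measure ℂ) (J : ℂ → ℂ) : Prop :=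
  MemHinf μ J ∧ ∀ᵐ z ∂μ, ‖J z‖ = 1

/-- The dual norm `α'(h) = sup{∫ |fh| dμ : f ∈ L^∞, α(f) ≤ 1}`. -/
def dualNorm {μ : Measure ℂ} (N : GaugeNorm μ) (h : ℂ → ℂ) : ℝ≥0∞ :=
  ⨆ (f : ℂ → ℂ) (_ : MemLp f ⊤ μ ∧ N.α f ≤ 1), ∫⁻ z, ‖f z * h z‖₊ ∂μ

/-- Lemma 2.4, generalized Hölder inequality: if `f ∈ L^α` and
`h ∈ 𝓛^{α'}` then `fh ∈ L¹` and `‖fh‖₁ ≤ α(f)·α'(h)`. -/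
theorem holder_gauge (μ : Measure ℂ) (hμ : OnCircle μ) (N : GaugeNorm μ)
    (f h : ℂ → ℂ)
    (hf_meas : AEMeasurable f μ) (hf : f ∈ aClosure N {g | MemLp g ⊤ μ})
    (hh_meas : AEMeasurable h μ) (hh : dualNorm N h < ⊤) :
    Integrable (fun z => f z * h z) μ ∧
      ∫⁻ z, ‖f z * h z‖₊ ∂μ ≤ N.α f * dualNorm N h := by
  -- Step 1: the bounded case
  have bounded_holder : ∀ g : ℂ → ℂ, MemLp g ⊤ μ →
      ∫⁻ z, ‖g z * h z‖₊ ∂μ ≤ N.α g * dualNorm N h := by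
    intro g hg
    by_cases h0 : N.α g = 0
    · have hg0 : ∫⁻ z, (‖g z‖₊ : ℝ≥0∞) ∂μ = 0 :=
        le_antisymm (h0 ▸ N.dominates g hg) (by positivity)
      have hae : ∀ᵐ z ∂μ, (‖g z‖₊ : ℝ≥0∞) = 0 :=
        (lintegral_eq_zero_iff' hg.aestronglyMeasurable.enorm).mp hg0
      have : (fun z => (‖g z * h z‖₊ : ℝ≥0∞)) =ᵐ[μ] 0 := by
        filter_upwards [hae] with z hz
        simp only [nnnorm_mul, ENNReal.coe_mul, hz, zero_mul, Pi.zero_apply]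
      rw [lintegral_congr_ae this]
      simp
    · have hfin : N.α g < ⊤ := N.finite_on_bdd g hg
      set a := N.α g with ha
      set c : ℂ := Complex.ofReal (a.toReal)⁻¹ with hcdef
      have hc : (‖c‖₊ : ℝ≥0∞) = a⁻¹ := by
        have h1 : ‖c‖ = (a.toReal)⁻¹ := by
          rw [hcdef, Complex.norm_real, Real.norm_eq_abs,
            _root_.abs_of_nonneg (inv_nonneg.mpr ENNReal.toReal_nonneg)]
        rw [← enorm_eq_nnnorm, ← ofReal_norm, h1,
          ENNReal.ofReal_inv_of_pos (ENNReal.toReal_pos h0 hfin.ne),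
          ENNReal.ofReal_toReal hfin.ne]
      have hmem : MemLp (fun z => c * g z) ⊤ μ := hg.const_mul c
      have halpha : N.α (fun z => c * g z) = 1 := by
        rw [N.smul_eq, hc, ENNReal.inv_mul_cancel h0 hfin.ne]
      have hle : ∫⁻ z, ‖(c * g z) * h z‖₊ ∂μ ≤ dualNorm N h := by
        exact le_iSup₂_of_le (fun z => c * g z) ⟨hmem, halpha.le⟩ le_rfl
      have key : ∫⁻ z, ‖(c * g z) * h z‖₊ ∂μ
          = (‖c‖₊ : ℝ≥0∞) * ∫⁻ z, ‖g z * h z‖₊ ∂μ := by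
        rw [← lintegral_const_mul' _ _ ENNReal.coe_ne_top]
        congr 1; funext z
        rw [mul_assoc, nnnorm_mul, ENNReal.coe_mul]
      calc ∫⁻ z, ‖g z * h z‖₊ ∂μ
          = (a * a⁻¹) * ∫⁻ z, ‖g z * h z‖₊ ∂μ := by
            rw [ENNReal.mul_inv_cancel h0 hfin.ne, one_mul]
        _ = a * ((‖c‖₊ : ℝ≥0∞) * ∫⁻ z, ‖g z * h z‖₊ ∂μ) := by rw [mul_assoc, hc]
        _ = a * ∫⁻ z, ‖(c * g z) * h z‖₊ ∂μ := by rw [← key]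
        _ ≤ a * dualNorm N h := mul_le_mul_right hle a
  -- Step 2: α f < ∞
  have hA : N.α f < ⊤ := by
    obtain ⟨g, hgS, hfg⟩ := hf 1 zero_lt_one
    have heq : f = (f - g) + g := (sub_add_cancel f g).symm
    have : N.α f ≤ N.α (f - g) + N.α g := by
      calc N.α f = N.α ((f - g) + g) := by rw [← heq]
        _ ≤ N.α (f - g) + N.α g := N.add_le _ _
    exact lt_of_le_of_lt this
      (ENNReal.add_lt_top.mpr ⟨hfg.trans (by norm_num), N.finite_on_bdd g hgS⟩)
  -- Step 3: measurable representative and simple approximations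
  set f₀ := hf_meas.mk f with hf₀def
  have hf₀m : Measurable f₀ := hf_meas.measurable_mk
  have hff₀ : f =ᵐ[μ] f₀ := hf_meas.ae_eq_mk
  set G : ℂ → ℝ≥0∞ := fun z => (‖f₀ z‖₊ : ℝ≥0∞) with hGdef
  have hG : Measurable G := hf₀m.enorm
  set e : ℕ → SimpleFunc ℂ ℝ≥0∞ := fun n => SimpleFunc.eapprox G n with hedef
  set s : ℕ → SimpleFunc ℂ ℝ := fun n => (e n).map ENNReal.toReal with hsdef
  have he_le : ∀ n z, e n z ≤ G z := fun n z => by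
    calc e n z ≤ ⨆ m, SimpleFunc.eapprox G m z := le_iSup (fun m => SimpleFunc.eapprox G m z) n
      _ = G z := SimpleFunc.iSup_eapprox_apply hG z
  have he_ne : ∀ n z, e n z ≠ ⊤ := fun n z => (SimpleFunc.eapprox_lt_top G n z).ne
  have hsz : ∀ n z, (s n) z = (e n z).toReal := fun n z => rfl
  have hsle : ∀ n, ∀ z, 0 ≤ (s n) z ∧ (s n) z ≤ ‖f₀ z‖ := by
    intro n z
    refine ⟨ENNReal.toReal_nonneg, ?_⟩
    have h1 : (e n z).toReal ≤ (G z).toReal :=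
      ENNReal.toReal_mono (by simp [hGdef]) (he_le n z)
    have h2 : (G z).toReal = ‖f₀ z‖ := by
      simp [hGdef]
    rw [hsz]; rw [h2] at h1; exact h1
  have hαs : ∀ n, N.α (fun z => (((s n) z : ℝ) : ℂ)) ≤ N.α f := by
    intro n
    have h1 : N.α (fun z => (((s n) z : ℝ) : ℂ)) ≤
        ⨆ (t : SimpleFunc ℂ ℝ) (_ : ∀ z, 0 ≤ t z ∧ t z ≤ ‖f₀ z‖),
          N.α (fun z => ((t z : ℝ) : ℂ)) := le_iSup₂_of_le (s n) (hsle n) le_rfl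
    rw [← N.eq_sup_simple f₀ hf₀m.aemeasurable] at h1
    rwa [N.ae_eq f f₀ hff₀]
  have hmem : ∀ n, MemLp (fun z => (((s n) z : ℝ) : ℂ)) ⊤ μ := by
    intro n
    have := SimpleFunc.memLp_top ((s n).map (fun r : ℝ => (r : ℂ))) μ
    exact this
  -- Step 4: bound each approximant integral
  have hb : ∀ n, ∫⁻ z, (e n z) * ‖h z‖₊ ∂μ ≤ N.α f * dualNorm N h := by
    intro n
    have h1 : (fun z => ((e n z) * (‖h z‖₊ : ℝ≥0∞)))
        = fun z => (‖(((s n) z : ℝ) : ℂ) * h z‖₊ : ℝ≥0∞) := by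
      funext z
      rw [nnnorm_mul, ENNReal.coe_mul]
      congr 1
      rw [← ENNReal.ofReal_toReal (he_ne n z), ← enorm_eq_nnnorm, ← ofReal_norm]
      congr 1
      rw [Complex.norm_real, Real.norm_eq_abs, hsz, _root_.abs_of_nonneg ENNReal.toReal_nonneg]
    calc ∫⁻ z, (e n z) * ‖h z‖₊ ∂μ
        = ∫⁻ z, ‖(((s n) z : ℝ) : ℂ) * h z‖₊ ∂μ := by rw [h1]
      _ ≤ N.α (fun z => (((s n) z : ℝ) : ℂ)) * dualNorm N h := bounded_holder _ (hmem n)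
      _ ≤ N.α f * dualNorm N h := mul_le_mul_left (hαs n) _
  -- Step 5: monotone convergence
  have hsup : ∫⁻ z, G z * ‖h z‖₊ ∂μ = ⨆ n, ∫⁻ z, e n z * ‖h z‖₊ ∂μ := by
    rw [← lintegral_iSup']
    · apply lintegral_congr
      intro z
      rw [← ENNReal.iSup_mul, SimpleFunc.iSup_eapprox_apply hG z]
    · intro n
      exact ((e n).measurable.aemeasurable).mul hh_meas.enorm
    · filter_upwards with z
      intro m k hmk
      exact mul_le_mul_left (SimpleFunc.monotone_eapprox G hmk z) _
  have hid : ∫⁻ z, ‖f z * h z‖₊ ∂μ = ∫⁻ z, G z * ‖h z‖₊ ∂μ := by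
    apply lintegral_congr_ae
    filter_upwards [hff₀] with z hz
    rw [nnnorm_mul, ENNReal.coe_mul, hz]
  -- conclusion
  have hineq : ∫⁻ z, ‖f z * h z‖₊ ∂μ ≤ N.α f * dualNorm N h := by
    rw [hid, hsup]
    exact iSup_le hb
  refine ⟨⟨(hf_meas.mul hh_meas).aestronglyMeasurable, ?_⟩, hineq⟩
  exact lt_of_le_of_lt hineq (ENNReal.mul_lt_top hA hh)
end
end

section
/- Let α be a continuous ∥·∥₁-dominating normalized gauge norm. If 0 ≤ f₁ ≤ f₂ ≤ … is an increasing sequence of measurable functions on the unit circle converging almost everywhere to f, then α(fₙ) → α(f). -/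
open MeasureTheory Complex Filter Finset
open scoped ENNReal NNReal Topology

noncomputable section

lemma ennreal_le_of_lt_one_mul' {a b : ℝ≥0∞} (h : ∀ c : ℝ≥0, c < 1 → (c : ℝ≥0∞) * a ≤ b) :
    a ≤ b := by
  rw [← one_mul a]
  refine ENNReal.mul_le_of_forall_lt fun a' ha' b' hb' => ?_
  lift a' to ℝ≥0 using (ha'.trans_le le_top).ne
  exact le_trans (mul_le_mul_right hb'.le _) (h a' (by exact_mod_cast ha'))

lemma gaugeMonoAux {μ : Measure ℂ} (N : GaugeNorm μ) {u v : ℂ → ℝ}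
    (hu : Measurable u) (hv : Measurable v) (h0 : ∀ z, 0 ≤ u z) (huv : ∀ z, u z ≤ v z) :
    N.α (fun z => ((u z : ℝ) : ℂ)) ≤ N.α (fun z => ((v z : ℝ) : ℂ)) := by
  have hmu : AEMeasurable (fun z => ((u z : ℝ) : ℂ)) μ :=
    (Complex.measurable_ofReal.comp hu).aemeasurable
  have hmv : AEMeasurable (fun z => ((v z : ℝ) : ℂ)) μ :=
    (Complex.measurable_ofReal.comp hv).aemeasurable
  rw [N.eq_sup_simple _ hmu, N.eq_sup_simple _ hmv]
  refine iSup₂_le fun s hs => le_iSup₂_of_le s ?_ le_rfl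
  intro z
  obtain ⟨h1, h2⟩ := hs z
  refine ⟨h1, h2.trans ?_⟩
  simp only [Complex.norm_real, Real.norm_eq_abs, _root_.abs_of_nonneg (h0 z),
    _root_.abs_of_nonneg ((h0 z).trans (huv z))]
  exact huv z

/-- Everywhere-pointwise version of the monotone convergence theorem for gauge norms. -/
lemma gaugeMCTAux (μ : Measure ℂ) (hμ : OnCircle μ)
    (N : GaugeNorm μ) (hN : N.IsContinuous)
    (f : ℕ → ℂ → ℝ) (g : ℂ → ℝ)
    (hmeas : ∀ n, Measurable (f n)) (hgmeas : Measurable g)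
    (hnonneg : ∀ n z, 0 ≤ f n z)
    (hmono : ∀ n z, f n z ≤ f (n + 1) z)
    (hconv : ∀ z, Tendsto (fun n => f n z) atTop (nhds (g z))) :
    Tendsto (fun n => N.α (fun z => ((f n z : ℝ) : ℂ))) atTop
      (nhds (N.α (fun z => ((g z : ℝ) : ℂ)))) := by
  haveI : IsProbabilityMeasure μ := hμ.1
  have hmono' : ∀ z, Monotone fun n => f n z := fun z =>
    monotone_nat_of_le_succ fun n => hmono n z
  have hfg : ∀ n z, f n z ≤ g z := fun n z =>
    ge_of_tendsto (hconv z) (eventually_atTop.2 ⟨n, fun m hm => hmono' z hm⟩)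
  set αf : ℕ → ℝ≥0∞ := fun n => N.α (fun z => ((f n z : ℝ) : ℂ)) with hαf
  have hαmono : Monotone αf := monotone_nat_of_le_succ fun n =>
    gaugeMonoAux N (hmeas n) (hmeas (n+1)) (hnonneg n) (hmono n)
  have htend : Tendsto αf atTop (𝓝 (⨆ n, αf n)) := tendsto_atTop_iSup hαmono
  suffices h : (⨆ n, αf n) = N.α (fun z => ((g z : ℝ) : ℂ)) by rw [← h]; exact htend
  refine le_antisymm (iSup_le fun n => gaugeMonoAux N (hmeas n) hgmeas (hnonneg n) (hfg n)) ?_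
  set L := ⨆ n, αf n with hL
  have hmg : AEMeasurable (fun z => ((g z : ℝ) : ℂ)) μ :=
    (Complex.measurable_ofReal.comp hgmeas).aemeasurable
  rw [N.eq_sup_simple _ hmg]
  refine iSup₂_le fun s hs => ?_
  -- s is simple, 0 ≤ s ≤ g pointwise
  have hg0 : ∀ z, 0 ≤ g z := fun z => (hnonneg 0 z).trans (hfg 0 z)
  have hsg : ∀ z, s z ≤ g z := by
    intro z
    have h2 := (hs z).2
    rwa [Complex.norm_real, Real.norm_eq_abs, _root_.abs_of_nonneg (hg0 z)] at h2
  -- bound for s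
  obtain ⟨M, hM⟩ := s.exists_forall_le
  have hM0 : ∀ z, s z ≤ max M 0 := fun z => (hM z).trans (le_max_left _ _)
  set M' : ℝ := max M 0 with hM'
  have hM'0 : 0 ≤ M' := le_max_right _ _
  refine ennreal_le_of_lt_one_mul' fun c hc => ?_
  rcases eq_or_lt_of_le (zero_le (a := c)) with hc0 | hc0
  · simp [← hc0]
  -- the sets A n
  set A : ℕ → Set ℂ := fun n => {z | (c : ℝ) * s z ≤ f n z} with hA
  have hAmeas : ∀ n, MeasurableSet (A n) :=
    fun n => measurableSet_le (s.measurable.const_mul _) (hmeas n)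
  have hAmono : Monotone A := fun n m hnm z hz => le_trans hz (hmono' z hnm)
  have hAunion : ∀ z, ∃ n, z ∈ A n := by
    intro z
    rcases eq_or_lt_of_le ((hs z).1) with h0 | h0
    · exact ⟨0, by simp [hA, ← h0, hnonneg 0 z]⟩
    · have hlt : (c : ℝ) * s z < g z := by
        calc (c : ℝ) * s z < 1 * s z := by
              exact mul_lt_mul_of_pos_right (by exact_mod_cast hc) h0
          _ = s z := one_mul _
          _ ≤ g z := hsg z
      obtain ⟨n, hn⟩ := ((hconv z).eventually (eventually_gt_nhds hlt)).exists
      exact ⟨n, hn.le⟩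
  -- measure of complements tends to 0
  have hμtend : Tendsto (fun n => μ (A n)ᶜ) atTop (𝓝 0) := by
    have h1 : Tendsto (μ ∘ fun n => (A n)ᶜ) atTop (𝓝 (μ (⋂ n, (A n)ᶜ))) :=
      tendsto_measure_iInter_atTop
        (fun n => (hAmeas n).compl.nullMeasurableSet)
        (fun n m hnm => Set.compl_subset_compl.2 (hAmono hnm))
        ⟨0, measure_ne_top μ _⟩
    have h2 : (⋂ n, (A n)ᶜ) = ∅ := by
      rw [Set.eq_empty_iff_forall_notMem]
      intro z hz
      obtain ⟨n, hn⟩ := hAunion z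
      exact (Set.mem_iInter.mp hz n) hn
    rw [h2, measure_empty] at h1
    exact h1
  -- α of complement indicators tends to 0
  have hαχ : Tendsto (fun n => N.α (Set.indicator (A n)ᶜ fun _ => 1)) atTop (𝓝 0) := by
    rw [ENNReal.tendsto_nhds_zero]
    intro ε hε
    rcases eq_or_lt_of_le (zero_le (a := ε)) with h0 | h0
    · exact absurd h0.symm hε.ne'
    obtain ⟨δ, hδ0, hδ⟩ := hN ε h0
    filter_upwards [hμtend.eventually_lt_const hδ0] with n hn
    exact (hδ _ (hAmeas n).compl hn).le
  -- decomposition inequality: α(s) ≤ α(s·χ_{A n}) + M'' * α(χ_{A nᶜ})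
  set M'' : ℝ≥0∞ := (‖(M' : ℂ)‖₊ : ℝ≥0∞) with hM''
  have hM''top : M'' ≠ ⊤ := ENNReal.coe_ne_top
  have key : ∀ n, N.α (fun z => ((s z : ℝ) : ℂ)) ≤
      N.α (fun z => ((Set.indicator (A n) (fun w => s w) z : ℝ) : ℂ)) +
        M'' * N.α (Set.indicator (A n)ᶜ fun _ => 1) := by
    intro n
    have hsplit : (fun z => ((s z : ℝ) : ℂ)) =
        (fun z => ((Set.indicator (A n) (fun w => s w) z : ℝ) : ℂ)) +
        (fun z => ((Set.indicator (A n)ᶜ (fun w => s w) z : ℝ) : ℂ)) := by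
      funext z
      by_cases hz : z ∈ A n <;> simp [hz]
    calc N.α (fun z => ((s z : ℝ) : ℂ))
        ≤ N.α (fun z => ((Set.indicator (A n) (fun w => s w) z : ℝ) : ℂ)) +
          N.α (fun z => ((Set.indicator (A n)ᶜ (fun w => s w) z : ℝ) : ℂ)) := by
          rw [hsplit]; exact N.add_le _ _
      _ ≤ _ := by
          gcongr
          -- α(ind s) ≤ M'' * α(χ)
          have h1 : N.α (fun z => ((Set.indicator (A n)ᶜ (fun w => s w) z : ℝ) : ℂ)) ≤
              N.α (fun z => ((M' * Set.indicator (A n)ᶜ (fun _ => (1:ℝ)) z : ℝ) : ℂ)) := by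
            refine gaugeMonoAux N ((s.measurable).indicator (hAmeas n).compl)
              ((measurable_const.indicator (hAmeas n).compl).const_mul M') ?_ ?_
            · intro z; by_cases hz : z ∈ (A n)ᶜ <;> simp [hz, (hs z).1]
            · intro z; by_cases hz : z ∈ (A n)ᶜ <;> simp [hz, hM0 z]
          have h2 : N.α (fun z => ((M' * Set.indicator (A n)ᶜ (fun _ => (1:ℝ)) z : ℝ) : ℂ)) =
              M'' * N.α (Set.indicator (A n)ᶜ fun _ => 1) := by
            have : (fun z => ((M' * Set.indicator (A n)ᶜ (fun _ => (1:ℝ)) z : ℝ) : ℂ)) =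
                (fun z => (M' : ℂ) * (Set.indicator (A n)ᶜ (fun _ => (1:ℂ)) z)) := by
              funext z; by_cases hz : z ∈ (A n)ᶜ <;> simp [hz]
            rw [this, N.smul_eq]
          exact h1.trans (le_of_eq h2)
  -- c * α(ind A n s) ≤ αf n
  have key2 : ∀ n, (c : ℝ≥0∞) * N.α (fun z => ((Set.indicator (A n) (fun w => s w) z : ℝ) : ℂ))
      ≤ αf n := by
    intro n
    have h1 : (fun z => (((c : ℝ) * Set.indicator (A n) (fun w => s w) z : ℝ) : ℂ)) =
        (fun z => ((c : ℝ) : ℂ) * ((Set.indicator (A n) (fun w => s w) z : ℝ) : ℂ)) := by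
      funext z; push_cast; ring
    have h2 : N.α (fun z => (((c : ℝ) * Set.indicator (A n) (fun w => s w) z : ℝ) : ℂ)) =
        (c : ℝ≥0∞) * N.α (fun z => ((Set.indicator (A n) (fun w => s w) z : ℝ) : ℂ)) := by
      rw [h1, N.smul_eq]
      congr 1
      simp
    rw [← h2]
    refine gaugeMonoAux N (((s.measurable).indicator (hAmeas n)).const_mul _) (hmeas n) ?_ ?_
    · intro z; by_cases hz : z ∈ A n <;>
        simp [hz, mul_nonneg (NNReal.coe_nonneg c) ((hs z).1)]
    · intro z
      by_cases hz : z ∈ A n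
      · rw [Set.indicator_of_mem hz]; exact hz
      · rw [Set.indicator_of_notMem hz]; simpa using hnonneg n z
  -- combine
  have final : ∀ n, (c : ℝ≥0∞) * N.α (fun z => ((s z : ℝ) : ℂ)) ≤
      L + M'' * N.α (Set.indicator (A n)ᶜ fun _ => 1) := by
    intro n
    calc (c : ℝ≥0∞) * N.α (fun z => ((s z : ℝ) : ℂ))
        ≤ (c : ℝ≥0∞) * (N.α (fun z => ((Set.indicator (A n) (fun w => s w) z : ℝ) : ℂ)) +
            M'' * N.α (Set.indicator (A n)ᶜ fun _ => 1)) := by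
          exact mul_le_mul_right (key n) _
      _ = (c : ℝ≥0∞) * N.α (fun z => ((Set.indicator (A n) (fun w => s w) z : ℝ) : ℂ)) +
            (c : ℝ≥0∞) * (M'' * N.α (Set.indicator (A n)ᶜ fun _ => 1)) := by
          rw [mul_add]
      _ ≤ αf n + M'' * N.α (Set.indicator (A n)ᶜ fun _ => 1) := by
          refine add_le_add (key2 n) ?_
          calc (c : ℝ≥0∞) * (M'' * N.α (Set.indicator (A n)ᶜ fun _ => 1))
              ≤ 1 * (M'' * N.α (Set.indicator (A n)ᶜ fun _ => 1)) :=
                mul_le_mul_left (by exact_mod_cast hc.le) _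
            _ = _ := one_mul _
      _ ≤ L + M'' * N.α (Set.indicator (A n)ᶜ fun _ => 1) := by
          gcongr; exact le_iSup αf n
  have hlim : Tendsto (fun n => L + M'' * N.α (Set.indicator (A n)ᶜ fun _ => 1)) atTop
      (𝓝 (L + M'' * 0)) :=
    Tendsto.const_add L (ENNReal.Tendsto.const_mul hαχ (Or.inr hM''top))
  have := ge_of_tendsto' hlim final
  simpa using this

/-- Proposition 2.2, generalized monotone convergence theorem:
for a continuous `‖·‖₁`-dominating normalized gauge norm `α`, if `0 ≤ f₁ ≤ f₂ ≤ …`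
are measurable and `fₙ → f` a.e., then `α(fₙ) → α(f)`. -/
theorem gauge_monotone_convergence (μ : Measure ℂ) (hμ : OnCircle μ)
    (N : GaugeNorm μ) (hN : N.IsContinuous)
    (f : ℕ → ℂ → ℝ) (g : ℂ → ℝ)
    (hmeas : ∀ n, Measurable (f n)) (hgmeas : Measurable g)
    (hnonneg : ∀ z, 0 ≤ f 0 z)
    (hmono : ∀ n z, f n z ≤ f (n + 1) z)
    (hae : ∀ᵐ z ∂μ, Tendsto (fun n => f n z) atTop (nhds (g z))) :
    Tendsto (fun n => N.α (fun z => ((f n z : ℝ) : ℂ))) atTop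
      (nhds (N.α (fun z => ((g z : ℝ) : ℂ)))) := by
  -- reduce to pointwise everywhere by modifying on a null set
  classical
  set S : Set ℂ := {z | ¬ Tendsto (fun n => f n z) atTop (nhds (g z))} with hS
  have hμS : μ S = 0 := hae
  set T : Set ℂ := MeasureTheory.toMeasurable μ S with hT
  have hTmeas : MeasurableSet T := measurableSet_toMeasurable μ S
  have hμT : μ T = 0 := by rw [hT, measure_toMeasurable]; exact hμS
  set f' : ℕ → ℂ → ℝ := fun n => Set.indicator Tᶜ (f n) with hf'
  set g' : ℂ → ℝ := Set.indicator Tᶜ g with hg'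
  have hae' : ∀ n, f' n =ᵐ[μ] f n := by
    intro n
    refine (measure_mono_null ?_ hμT : μ {z | f' n z ≠ f n z} = 0)
    intro z hz
    by_contra hzT
    exact hz (by simp [hf', Set.indicator_of_mem (Set.mem_compl hzT)])
  have hgae' : g' =ᵐ[μ] g := by
    refine (measure_mono_null ?_ hμT : μ {z | g' z ≠ g z} = 0)
    intro z hz
    by_contra hzT
    exact hz (by simp [hg', Set.indicator_of_mem (Set.mem_compl hzT)])
  have hnonneg' : ∀ n z, 0 ≤ f n z := by
    intro n
    induction n with
    | zero => exact hnonneg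
    | succ k ih => exact fun z => (ih z).trans (hmono k z)
  have key := gaugeMCTAux μ hμ N hN f' g'
    (fun n => (hmeas n).indicator hTmeas.compl)
    (hgmeas.indicator hTmeas.compl)
    (fun n z => by by_cases hz : z ∈ Tᶜ <;> simp [hf', hz, hnonneg' n z])
    (fun n z => by by_cases hz : z ∈ Tᶜ <;> simp [hf', hz, hmono n z])
    (fun z => by
      by_cases hz : z ∈ Tᶜ
      · have hzS : z ∉ S := fun h => hz (subset_toMeasurable μ S h)
        simp only [hf', hg', Set.indicator_of_mem hz]
        exact not_not.mp hzS
      · simp only [hf', hg', Set.indicator_of_notMem hz]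
        exact tendsto_const_nhds)
  have e1 : ∀ n, N.α (fun z => ((f' n z : ℝ) : ℂ)) = N.α (fun z => ((f n z : ℝ) : ℂ)) := by
    intro n
    refine N.ae_eq _ _ ?_
    filter_upwards [hae' n] with z hz
    rw [hz]
  have e2 : N.α (fun z => ((g' z : ℝ) : ℂ)) = N.α (fun z => ((g z : ℝ) : ℂ)) := by
    refine N.ae_eq _ _ ?_
    filter_upwards [hgae'] with z hz
    rw [hz]
  simpa only [e1, e2] using key
end
end

section
/- Let α be a continuous ∥·∥₁-dominating normalized gauge norm and M a closed subspace of H^α. Then M ∩ H^∞ is weak*-closed in H^∞. -/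
open MeasureTheory Complex Filter Finset
open scoped ENNReal NNReal Topology

noncomputable section

/-! ### Auxiliary lemmas for Lemma 3.9 -/

section AuxHB

variable {μ : Measure ℂ}

lemma hbAlpha_zero (N : GaugeNorm μ) : N.α (fun _ => 0) = 0 := by
  have h := N.smul_eq 0 (fun _ => 1)
  simpa using h

lemma hbAlpha_ae_zero (N : GaugeNorm μ) {u : ℂ → ℂ} (h : u =ᵐ[μ] fun _ => 0) : N.α u = 0 :=
  (N.ae_eq u _ h).trans (hbAlpha_zero N)

lemma hbAlpha_mono (N : GaugeNorm μ) {u w : ℂ → ℂ} (hu : AEMeasurable u μ)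
    (hw : AEMeasurable w μ)
    (h : ∀ᵐ z ∂μ, ‖u z‖ ≤ ‖w z‖) : N.α u ≤ N.α w := by
  set u₀ := hu.mk u with hu₀def
  set w₀ := hw.mk w with hw₀def
  have hu₀ : Measurable u₀ := hu.measurable_mk
  have hw₀ : Measurable w₀ := hw.measurable_mk
  have hae : ∀ᵐ z ∂μ, ‖u₀ z‖ ≤ ‖w₀ z‖ := by
    filter_upwards [h, hu.ae_eq_mk, hw.ae_eq_mk] with z h1 h2 h3
    rw [hu₀def, hw₀def, ← h2, ← h3]; exact h1
  set T : Set ℂ := {z | ‖u₀ z‖ ≤ ‖w₀ z‖} with hTdef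
  have hT : MeasurableSet T := by
    have hTeq : T = {z | ‖u₀ z‖ ≤ ‖w₀ z‖} := by
      ext z; simp [hTdef]
    rw [hTeq]
    exact measurableSet_le hu₀.norm hw₀.norm
  set u' : ℂ → ℂ := T.indicator u₀ with hu'def
  have hu' : Measurable u' := hu₀.indicator hT
  have hu'ae : u =ᵐ[μ] u' := by
    filter_upwards [hae, hu.ae_eq_mk] with z h1 h2
    rw [h2, hu'def]
    exact (Set.indicator_of_mem (show z ∈ T from h1) u₀).symm
  have hptw : ∀ z, ‖u' z‖ ≤ ‖w₀ z‖ := by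
    intro z
    by_cases hz : z ∈ T
    · rw [hu'def, Set.indicator_of_mem hz]; exact hz
    · rw [hu'def, Set.indicator_of_notMem hz]
      simpa using norm_nonneg (w₀ z)
  have h1 : N.α u = N.α u' := N.ae_eq u u' hu'ae
  have h2 : N.α w = N.α w₀ := N.ae_eq w w₀ hw.ae_eq_mk
  rw [h1, h2, N.eq_sup_simple u' hu'.aemeasurable, N.eq_sup_simple w₀ hw₀.aemeasurable]
  refine iSup₂_le fun s hs => ?_
  exact le_iSup₂_of_le s (fun z => ⟨(hs z).1, le_trans (hs z).2 (hptw z)⟩) le_rfl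

lemma hbAlpha_const (N : GaugeNorm μ) {C : ℝ} (hC : 0 ≤ C) :
    N.α (fun _ => (C : ℂ)) = ENNReal.ofReal C := by
  have h := N.smul_eq (C : ℂ) (fun _ => 1)
  simp only [mul_one] at h
  rw [h, N.norm_one, mul_one, ← enorm_eq_nnnorm, ← ofReal_norm]
  congr 1
  rw [Complex.norm_real, Real.norm_of_nonneg hC]

lemma hbAlpha_le_const (N : GaugeNorm μ) {u : ℂ → ℂ} {C : ℝ} (hu : AEMeasurable u μ)
    (hC : 0 ≤ C) (h : ∀ᵐ z ∂μ, ‖u z‖ ≤ C) : N.α u ≤ ENNReal.ofReal C := by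
  have hm := hbAlpha_mono N (w := fun _ => (C : ℂ)) hu aemeasurable_const ?_
  · rwa [hbAlpha_const N hC] at hm
  · filter_upwards [h] with z hz
    rwa [Complex.norm_real, Real.norm_of_nonneg hC]

lemma hbMemtop_bound {x : ℂ → ℂ} (hx : MemLp x ⊤ μ) :
    ∃ C : ℝ, 0 ≤ C ∧ ∀ᵐ z ∂μ, ‖x z‖ ≤ C := by
  refine ⟨(eLpNorm x ⊤ μ).toReal, ENNReal.toReal_nonneg, ?_⟩
  have h2 : eLpNormEssSup x μ ≠ ⊤ := by
    rw [← eLpNorm_exponent_top]; exact hx.2.ne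
  filter_upwards [MeasureTheory.ae_le_eLpNormEssSup (f := x) (μ := μ)] with z hz
  have h3 := ENNReal.toReal_mono h2 hz
  simpa [eLpNorm_exponent_top] using h3

lemma hbMul_integrable {x h : ℂ → ℂ} (hx : MemLp x ⊤ μ) (hh : Integrable h μ) :
    Integrable (fun z => x z * h z) μ := by
  obtain ⟨C, _, hC⟩ := hbMemtop_bound hx
  exact hh.bdd_mul hx.aestronglyMeasurable hC

lemma hbIntegrable_pow (hμ : OnCircle μ) (n : ℕ) : Integrable (fun z : ℂ => z ^ n) μ := by
  have : IsProbabilityMeasure μ := hμ.1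
  have hb : ∀ᵐ z ∂μ, ‖(z : ℂ) ^ n‖ ≤ 1 := by
    have h0 : ∀ᵐ z ∂μ, z ∈ Metric.sphere (0 : ℂ) 1 := by
      have h1 := hμ.2.1
      rw [measure_eq_zero_iff_ae_notMem] at h1
      filter_upwards [h1] with z hz
      simpa using hz
    filter_upwards [h0] with z hz
    rw [mem_sphere_iff_norm, sub_zero] at hz
    simp [norm_pow, hz]
  exact (integrable_const (1 : ℝ)).mono' (by fun_prop) hb

lemma hbMemHinf_zero : MemHinf μ (fun _ => 0) := by
  refine ⟨MemLp.zero', fun n hn => ?_⟩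
  simp

lemma hbMemHinf_add (hμ : OnCircle μ) {f g : ℂ → ℂ} (hf : MemHinf μ f) (hg : MemHinf μ g) :
    MemHinf μ (f + g) := by
  refine ⟨hf.1.add hg.1, fun n hn => ?_⟩
  have h1 : ∫ z, (f + g) z * z ^ n ∂μ = ∫ z, (f z * z ^ n + g z * z ^ n) ∂μ := by
    congr 1; funext z; simp [Pi.add_apply]; ring
  rw [h1, integral_add (hbMul_integrable hf.1 (hbIntegrable_pow hμ n))
    (hbMul_integrable hg.1 (hbIntegrable_pow hμ n)), hf.2 n hn, hg.2 n hn, add_zero]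

lemma hbMemHinf_const_mul {f : ℂ → ℂ} (hf : MemHinf μ f) (c : ℂ) :
    MemHinf μ (fun z => c * f z) := by
  refine ⟨hf.1.const_mul c, fun n hn => ?_⟩
  have h1 : ∫ z, (c * f z) * z ^ n ∂μ = ∫ z, c * (f z * z ^ n) ∂μ := by
    congr 1; funext z; ring
  rw [h1, integral_const_mul, hf.2 n hn, mul_zero]

/-- The space of essentially bounded functions, as a real submodule of `ℂ → ℂ`. -/
def hbV (μ : Measure ℂ) : Submodule ℝ (ℂ → ℂ) where
  carrier := {x | MemLp x ⊤ μ}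
  add_mem' := fun hx hy => hx.add hy
  zero_mem' := MemLp.zero'
  smul_mem' := fun c x hx => hx.const_smul c

lemma hbV_mem {x : ℂ → ℂ} (hx : x ∈ hbV μ) : MemLp x ⊤ μ := hx

/-- Multiplication by `I` as a real-linear map on `hbV μ`. -/
def hbIV (μ : Measure ℂ) : ↥(hbV μ) →ₗ[ℝ] ↥(hbV μ) where
  toFun x := ⟨fun z => Complex.I * (x : ℂ → ℂ) z, (hbV_mem x.2).const_mul Complex.I⟩
  map_add' x y := by
    apply Subtype.ext; funext z
    show Complex.I * ((x : ℂ → ℂ) + (y : ℂ → ℂ)) z = _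
    simp [Pi.add_apply, mul_add]
  map_smul' r x := by
    apply Subtype.ext; funext z
    show Complex.I * (r • (x : ℂ → ℂ)) z = (r • (⟨fun z => Complex.I * (x : ℂ → ℂ) z, _⟩ : ↥(hbV μ)) : ℂ → ℂ) z
    simp [Pi.smul_apply, Complex.real_smul]
    ring

lemma hbIV_coe (x : ↥(hbV μ)) :
    ((hbIV μ x : ↥(hbV μ)) : ℂ → ℂ) = fun z => Complex.I * (x : ℂ → ℂ) z := rfl

lemma hbInd_mem {S : Set ℂ} (hS : MeasurableSet S) :
    (S.indicator fun _ => (1 : ℂ)) ∈ hbV μ := by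
  refine memLp_top_of_bound ((measurable_const.indicator hS).aestronglyMeasurable) 1
    (ae_of_all _ fun z => ?_)
  by_cases hz : z ∈ S <;> simp [Set.indicator_of_mem, Set.indicator_of_notMem, hz]

/-- Indicator function as an element of `hbV μ`. -/
def hbInd (μ : Measure ℂ) {S : Set ℂ} (hS : MeasurableSet S) : ↥(hbV μ) :=
  ⟨S.indicator fun _ => (1 : ℂ), hbInd_mem hS⟩

lemma hbExists_density (μ : Measure ℂ) [IsProbabilityMeasure μ] (N : GaugeNorm μ)
    (hN : N.IsContinuous) (K : ℝ) (θ : ↥(hbV μ) →ₗ[ℝ] ℝ)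
    (hθ : ∀ x : ↥(hbV μ), |θ x| ≤ K * (N.α (x : ℂ → ℂ)).toReal) :
    ∃ hfun : ℂ → ℝ, Integrable hfun μ ∧
      ∀ (S : Set ℂ) (hS : MeasurableSet S), ∫ z in S, hfun z ∂μ = θ (hbInd μ hS) := by
  classical
  -- the set function
  set v : Set ℂ → ℝ := fun S => if hS : MeasurableSet S then θ (hbInd μ hS) else 0 with hvdef
  have hv_meas : ∀ {S : Set ℂ} (hS : MeasurableSet S), v S = θ (hbInd μ hS) := by
    intro S hS; simp [hvdef, hS]
  -- smallness
  have hsmall : ∀ ε : ℝ, 0 < ε → ∃ δ : ℝ≥0∞, 0 < δ ∧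
      ∀ S : Set ℂ, MeasurableSet S → μ S < δ → |v S| < ε := by
    intro ε hε
    rcases le_or_gt K 0 with hK | hK
    · refine ⟨1, zero_lt_one, fun S hS _ => ?_⟩
      rw [hv_meas hS]
      have h1 := hθ (hbInd μ hS)
      have h2 : K * (N.α ((hbInd μ hS : ℂ → ℂ))).toReal ≤ 0 :=
        mul_nonpos_of_nonpos_of_nonneg hK ENNReal.toReal_nonneg
      exact lt_of_le_of_lt (le_trans h1 h2) hε
    · obtain ⟨δ, hδpos, hδ⟩ := hN (ENNReal.ofReal (ε / K))
        (ENNReal.ofReal_pos.2 (div_pos hε hK))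
      refine ⟨δ, hδpos, fun S hS hμS => ?_⟩
      rw [hv_meas hS]
      have h1 := hδ S hS hμS
      have h2 : (N.α (S.indicator fun _ => (1:ℂ))).toReal < ε / K :=
        ENNReal.toReal_lt_of_lt_ofReal h1
      calc |θ (hbInd μ hS)| ≤ K * (N.α ((hbInd μ hS : ℂ → ℂ))).toReal := hθ _
        _ < K * (ε / K) := by
            exact mul_lt_mul_of_pos_left h2 hK
        _ = ε := by field_simp
  -- additivity on disjoint unions
  have hv_union : ∀ {A B : Set ℂ}, MeasurableSet A → MeasurableSet B → Disjoint A B →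
      v (A ∪ B) = v A + v B := by
    intro A B hA hB hAB
    rw [hv_meas (hA.union hB), hv_meas hA, hv_meas hB, ← map_add]
    congr 1
    apply Subtype.ext
    show (A ∪ B).indicator (fun _ => (1:ℂ)) = A.indicator (fun _ => (1:ℂ)) + B.indicator (fun _ => (1:ℂ))
    rw [Set.indicator_union_of_disjoint hAB]
    rfl
  have hv_zero : ∀ {S : Set ℂ}, MeasurableSet S → μ S = 0 → v S = 0 := by
    intro S hS h0
    rw [hv_meas hS]
    have hzero : N.α ((hbInd μ hS : ℂ → ℂ)) = 0 := by
      apply hbAlpha_ae_zero N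
      rw [measure_eq_zero_iff_ae_notMem] at h0
      filter_upwards [h0] with z hz
      show S.indicator (fun _ => (1:ℂ)) z = 0
      simp [Set.indicator_of_notMem hz]
    have h1 := hθ (hbInd μ hS)
    rw [hzero] at h1
    simp only [ENNReal.toReal_zero, mul_zero] at h1
    exact abs_nonpos_iff.mp h1
  have hv_empty : v ∅ = 0 := hv_zero MeasurableSet.empty (measure_empty)
  -- finite unions
  have hv_biUnion : ∀ (Sf : ℕ → Set ℂ), (∀ i, MeasurableSet (Sf i)) →
      Pairwise (Function.onFun Disjoint Sf) →
      ∀ G : Finset ℕ, v (⋃ i ∈ G, Sf i) = ∑ i ∈ G, v (Sf i) := by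
    intro Sf hSm hdis G
    induction G using Finset.induction_on with
    | empty => simpa using hv_empty
    | @insert a G ha ih =>
      have h1 : (⋃ i ∈ insert a G, Sf i) = Sf a ∪ ⋃ i ∈ G, Sf i := by
        simp [Set.biUnion_insert]
      have hdisj : Disjoint (Sf a) (⋃ i ∈ G, Sf i) := by
        refine Set.disjoint_iUnion₂_right.2 fun i hi => hdis (fun he => ha (he ▸ hi))
      rw [h1, hv_union (hSm a) (G.measurableSet_biUnion fun i _ => hSm i) hdisj, ih,
        Finset.sum_insert ha]
  -- difference
  have hv_diff : ∀ {A B : Set ℂ}, MeasurableSet A → MeasurableSet B → B ⊆ A →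
      v (A \ B) = v A - v B := by
    intro A B hA hB hBA
    have h1 : A = B ∪ (A \ B) := by
      rw [Set.union_diff_cancel hBA]
    have h2 : v A = v B + v (A \ B) := by
      conv_lhs => rw [h1]
      exact hv_union hB (hA.diff hB) Set.disjoint_sdiff_right
    linarith
  -- the signed measure
  set sm : MeasureTheory.SignedMeasure ℂ :=
    { measureOf' := v
      empty' := hv_empty
      not_measurable' := fun S hS => by simp [hvdef, hS]
      m_iUnion' := by
        intro Sf hSm hdis
        show Tendsto (fun s : Finset ℕ => ∑ i ∈ s, v (Sf i)) atTop (𝓝 (v (⋃ i, Sf i)))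
        rw [Metric.tendsto_atTop]
        intro ε hε
        obtain ⟨δ, hδpos, hδ⟩ := hsmall ε hε
        set δ' := min δ 1 with hδ'def
        have hδ'pos : 0 < δ' := lt_min hδpos zero_lt_one
        have hδ'top : δ' ≠ ⊤ :=
          ne_top_of_le_ne_top ENNReal.one_ne_top (min_le_right _ _)
        have hsumne : ∑' i, μ (Sf i) ≠ ⊤ := by
          rw [← measure_iUnion hdis hSm]; exact (measure_lt_top μ _).ne
        have htail := ENNReal.tendsto_sum_nat_add (fun i => μ (Sf i)) hsumne
        rw [ENNReal.tendsto_atTop_zero] at htail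
        obtain ⟨n₀, hn₀⟩ := htail (δ' / 2)
          (ENNReal.div_pos hδ'pos.ne' ENNReal.ofNat_ne_top)
        refine ⟨Finset.range n₀, fun F hF => ?_⟩
        have hBm : MeasurableSet (⋃ i ∈ F, Sf i) := F.measurableSet_biUnion fun i _ => hSm i
        have hAm : MeasurableSet (⋃ i, Sf i) := MeasurableSet.iUnion hSm
        have hBA : (⋃ i ∈ F, Sf i) ⊆ ⋃ i, Sf i :=
          Set.iUnion₂_subset fun i _ => Set.subset_iUnion _ i
        have hsumF : ∑ i ∈ F, v (Sf i) = v (⋃ i ∈ F, Sf i) :=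
          (hv_biUnion Sf hSm hdis F).symm
        have hDsub : (⋃ i, Sf i) \ (⋃ i ∈ F, Sf i) ⊆ ⋃ k, Sf (k + n₀) := by
          rintro z ⟨hz1, hz2⟩
          obtain ⟨i, hi⟩ := Set.mem_iUnion.1 hz1
          have hiF : i ∉ F := fun hiF => hz2 (Set.mem_biUnion hiF hi)
          have hin₀ : n₀ ≤ i := by
            by_contra hlt
            exact hiF (hF (Finset.mem_range.2 (not_le.1 hlt)))
          refine Set.mem_iUnion.2 ⟨i - n₀, ?_⟩
          rwa [Nat.sub_add_cancel hin₀]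
        have hμD : μ ((⋃ i, Sf i) \ (⋃ i ∈ F, Sf i)) < δ := by
          calc μ _ ≤ μ (⋃ k, Sf (k + n₀)) := measure_mono hDsub
            _ ≤ ∑' k, μ (Sf (k + n₀)) := measure_iUnion_le _
            _ ≤ δ' / 2 := hn₀ n₀ le_rfl
            _ < δ' := ENNReal.half_lt_self hδ'pos.ne' hδ'top
            _ ≤ δ := min_le_left _ _
        have hvd := hv_diff hAm hBm hBA
        have hsm := hδ _ (hAm.diff hBm) hμD
        rw [hvd] at hsm
        rw [Real.dist_eq, hsumF, abs_sub_comm]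
        exact hsm } with hsmdef
  have hac : sm ≪ᵥ μ.toENNRealVectorMeasure := by
    intro S hS0
    by_cases hS : MeasurableSet S
    · rw [MeasureTheory.Measure.toENNRealVectorMeasure_apply_measurable hS] at hS0
      exact hv_zero hS hS0
    · show v S = 0
      simp [hvdef, hS]
  refine ⟨sm.rnDeriv μ, MeasureTheory.SignedMeasure.integrable_rnDeriv _ _, fun S hS => ?_⟩
  have heq := MeasureTheory.SignedMeasure.withDensityᵥ_rnDeriv_eq sm μ hac
  have h2 : (μ.withDensityᵥ (sm.rnDeriv μ)) S = sm S := by rw [heq]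
  rw [MeasureTheory.withDensityᵥ_apply (MeasureTheory.SignedMeasure.integrable_rnDeriv _ _) hS] at h2
  rw [h2]
  exact hv_meas hS

lemma hbExists_repr (μ : Measure ℂ) [IsProbabilityMeasure μ] (N : GaugeNorm μ)
    (hN : N.IsContinuous) (K : ℝ) (hK : 0 ≤ K) (ψ : ↥(hbV μ) →ₗ[ℝ] ℝ)
    (hψ : ∀ x : ↥(hbV μ), |ψ x| ≤ K * (N.α (x : ℂ → ℂ)).toReal) :
    ∃ h : ℂ → ℂ, Integrable h μ ∧ ∀ x : ↥(hbV μ),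
      ((ψ x : ℝ) : ℂ) - Complex.I * ((ψ (hbIV μ x) : ℝ) : ℂ) = ∫ z, (x : ℂ → ℂ) z * h z ∂μ := by
  classical
  have hfin : ∀ x : ↥(hbV μ), N.α (x : ℂ → ℂ) ≠ ⊤ :=
    fun x => (N.finite_on_bdd _ (hbV_mem x.2)).ne
  have hαI : ∀ x : ↥(hbV μ), N.α ((hbIV μ x : ↥(hbV μ)) : ℂ → ℂ) = N.α (x : ℂ → ℂ) := by
    intro x
    rw [hbIV_coe, N.smul_eq]
    simp
  set θ₂ : ↥(hbV μ) →ₗ[ℝ] ℝ := ψ.comp (hbIV μ) with hθ₂def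
  have hθ₂ : ∀ x : ↥(hbV μ), |θ₂ x| ≤ K * (N.α (x : ℂ → ℂ)).toReal := by
    intro x
    have := hψ (hbIV μ x)
    rwa [hαI x] at this
  obtain ⟨h₁, hh₁, hrep₁⟩ := hbExists_density μ N hN K ψ hψ
  obtain ⟨h₂, hh₂, hrep₂⟩ := hbExists_density μ N hN K θ₂ hθ₂
  set h : ℂ → ℂ := fun z => (h₁ z : ℂ) - Complex.I * (h₂ z : ℂ) with hhdef
  have hint : Integrable h μ := hh₁.ofReal.sub (hh₂.ofReal.const_mul _)
  set Φ : ↥(hbV μ) → ℂ := fun x => ((ψ x : ℝ) : ℂ) - Complex.I * ((ψ (hbIV μ x) : ℝ) : ℂ)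
    with hΦdef
  -- basic properties of Φ
  have hΦadd : ∀ x y, Φ (x + y) = Φ x + Φ y := by
    intro x y
    simp only [hΦdef, map_add]
    push_cast
    ring
  have hΦre : ∀ x, (Φ x).re = ψ x := by
    intro x
    simp [hΦdef]
  have hΦsmulR : ∀ (r : ℝ) (x), Φ (r • x) = (r : ℂ) * Φ x := by
    intro r x
    have e1 : ψ (r • x) = r * ψ x := by rw [LinearMap.map_smul]; rfl
    have e2 : ψ (hbIV μ (r • x)) = r * ψ (hbIV μ x) := by
      rw [LinearMap.map_smul, LinearMap.map_smul]; rfl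
    simp only [hΦdef, e1, e2]
    push_cast
    ring
  have hΦsub : ∀ x y, Φ (x - y) = Φ x - Φ y := by
    intro x y
    have h1 : x - y = x + (-1 : ℝ) • y := by module
    rw [h1, hΦadd, hΦsmulR]
    push_cast
    ring
  have hIVIV : ∀ x, hbIV μ (hbIV μ x) = -x := by
    intro x
    apply Subtype.ext
    funext z
    show Complex.I * (Complex.I * (x : ℂ → ℂ) z) = (-(x : ℂ → ℂ)) z
    rw [← mul_assoc, Complex.I_mul_I, Pi.neg_apply, neg_one_mul]
  have hΦI : ∀ x, Φ (hbIV μ x) = Complex.I * Φ x := by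
    intro x
    simp only [hΦdef, hIVIV x, map_neg]
    push_cast
    ring_nf
    rw [Complex.I_sq]
    ring
  have hΦc : ∀ (c : ℂ) (x : ↥(hbV μ)),
      Φ ⟨fun z => c * (x : ℂ → ℂ) z, (hbV_mem x.2).const_mul c⟩ = c * Φ x := by
    intro c x
    have hdecomp : (⟨fun z => c * (x : ℂ → ℂ) z, (hbV_mem x.2).const_mul c⟩ : ↥(hbV μ)) =
        c.re • x + c.im • (hbIV μ x) := by
      apply Subtype.ext
      funext z
      show c * (x : ℂ → ℂ) z = (c.re • (x : ℂ → ℂ) + c.im • (fun w => Complex.I * (x : ℂ → ℂ) w)) z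
      simp only [Pi.add_apply, Pi.smul_apply, Complex.real_smul]
      calc c * (x : ℂ → ℂ) z = ((c.re : ℂ) + (c.im : ℂ) * Complex.I) * (x : ℂ → ℂ) z := by
            rw [Complex.re_add_im]
        _ = (c.re : ℂ) * (x : ℂ → ℂ) z + (c.im : ℂ) * (Complex.I * (x : ℂ → ℂ) z) := by ring
    rw [hdecomp, hΦadd, hΦsmulR, hΦsmulR, hΦI]
    have hre : ((c.re : ℂ) + (c.im : ℂ) * Complex.I) * Φ x = c * Φ x := by
      rw [Complex.re_add_im]
    rw [← hre]
    ring
  have hΦabs : ∀ x, ‖Φ x‖ ≤ K * (N.α (x : ℂ → ℂ)).toReal := by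
    intro x
    rcases eq_or_ne (Φ x) 0 with h0 | h0
    · rw [h0]
      simpa using mul_nonneg hK ENNReal.toReal_nonneg
    · set c : ℂ := (starRingEnd ℂ) (Φ x) / (‖Φ x‖) with hcdef
      have habs0 : (‖Φ x‖ : ℂ) ≠ 0 := by simpa using h0
      have hcabs : ‖c‖ = 1 := by
        rw [hcdef, norm_div, Complex.norm_conj, Complex.norm_real,
          Real.norm_of_nonneg (norm_nonneg _), div_self (fun hh => h0 (by simpa using hh))]
      have h2 : c * Φ x = (‖Φ x‖ : ℂ) := by
        rw [hcdef]
        field_simp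
        rw [mul_comm, Complex.mul_conj, Complex.normSq_eq_norm_sq]
        norm_cast
      have h1 := hΦc c x
      have h3 : ψ ⟨fun z => c * (x : ℂ → ℂ) z, (hbV_mem x.2).const_mul c⟩ = ‖Φ x‖ := by
        have h4 := congrArg Complex.re (h1.trans h2)
        rwa [hΦre, Complex.ofReal_re] at h4
      have h5 : N.α (fun z => c * (x : ℂ → ℂ) z) = N.α (x : ℂ → ℂ) := by
        rw [N.smul_eq]
        have : ‖c‖₊ = 1 := by
          have : ‖c‖ = 1 := by rw [hcabs]
          ext
          simpa using this
        rw [this]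
        simp
      calc ‖Φ x‖ = ψ ⟨fun z => c * (x : ℂ → ℂ) z, (hbV_mem x.2).const_mul c⟩ := h3.symm
        _ ≤ |ψ _| := le_abs_self _
        _ ≤ K * (N.α ((⟨fun z => c * (x : ℂ → ℂ) z, (hbV_mem x.2).const_mul c⟩ : ↥(hbV μ)) : ℂ → ℂ)).toReal := hψ _
        _ = K * (N.α (x : ℂ → ℂ)).toReal := by rw [show ((⟨fun z => c * (x : ℂ → ℂ) z, (hbV_mem x.2).const_mul c⟩ : ↥(hbV μ)) : ℂ → ℂ) = fun z => c * (x : ℂ → ℂ) z from rfl, h5]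
  -- value on indicators
  have hbase : ∀ {S : Set ℂ} (hS : MeasurableSet S), Φ (hbInd μ hS) = ∫ z in S, h z ∂μ := by
    intro S hS
    have i1 : Integrable (fun z => ((h₁ z : ℝ) : ℂ)) (μ.restrict S) := hh₁.restrict.ofReal
    have i2 : Integrable (fun z => Complex.I * ((h₂ z : ℝ) : ℂ)) (μ.restrict S) :=
      (hh₂.restrict.ofReal).const_mul _
    have eA : ∫ z in S, ((h₁ z : ℝ) : ℂ) ∂μ = ((∫ z in S, h₁ z ∂μ : ℝ) : ℂ) := integral_ofReal
    have eB : ∫ z in S, Complex.I * ((h₂ z : ℝ) : ℂ) ∂μ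
        = Complex.I * ((∫ z in S, h₂ z ∂μ : ℝ) : ℂ) := by
      rw [integral_const_mul]
      congr 1
      exact integral_ofReal
    have e1 : ∫ z in S, h z ∂μ
        = (∫ z in S, h₁ z ∂μ : ℝ) - Complex.I * (∫ z in S, h₂ z ∂μ : ℝ) := by
      simp only [hhdef]
      rw [integral_sub i1 i2, eA, eB]
    rw [e1, hrep₁ S hS, hrep₂ S hS]
    rfl
  have hmulint : ∀ x : ↥(hbV μ), Integrable (fun z => (x : ℂ → ℂ) z * h z) μ :=
    fun x => hbMul_integrable (hbV_mem x.2) hint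
  -- simple functions
  have hsimple : ∀ g : SimpleFunc ℂ ℂ, ∀ hg : (⇑g) ∈ hbV μ,
      Φ ⟨⇑g, hg⟩ = ∫ z, g z * h z ∂μ := by
    intro g
    induction g using SimpleFunc.induction with
    | const c hS =>
      rename_i S
      intro hg
      have hcoe : ⇑(SimpleFunc.piecewise S hS (SimpleFunc.const ℂ c) (SimpleFunc.const ℂ 0)) =
          fun z => c * (S.indicator (fun _ => (1 : ℂ)) z) := by
        funext z
        by_cases hz : z ∈ S <;>
          simp [MeasureTheory.SimpleFunc.piecewise_apply, Set.indicator, hz]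
      have helem : (⟨_, hg⟩ : ↥(hbV μ)) =
          ⟨fun z => c * ((hbInd μ hS : ℂ → ℂ) z), (hbV_mem (hbInd μ hS).2).const_mul c⟩ :=
        Subtype.ext hcoe
      rw [helem, hΦc, hbase hS]
      have hptw : ∀ z, (⇑(SimpleFunc.piecewise S hS (SimpleFunc.const ℂ c) (SimpleFunc.const ℂ 0)) z) * h z
          = S.indicator (fun w => c * h w) z := by
        intro z
        rw [hcoe]
        by_cases hz : z ∈ S <;> simp [hz]
      rw [show (fun z => (⇑(SimpleFunc.piecewise S hS (SimpleFunc.const ℂ c) (SimpleFunc.const ℂ 0)) z) * h z) = fun z => S.indicator (fun w => c * h w) z from funext hptw]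
      rw [MeasureTheory.integral_indicator hS, integral_const_mul]
    | add hdisj ih₁ ih₂ =>
      rename_i g₁ g₂
      intro hg
      obtain ⟨C₁, hC₁⟩ := g₁.exists_forall_norm_le
      obtain ⟨C₂, hC₂⟩ := g₂.exists_forall_norm_le
      have hg₁ : ⇑g₁ ∈ hbV μ :=
        memLp_top_of_bound g₁.aestronglyMeasurable C₁ (ae_of_all _ hC₁)
      have hg₂ : ⇑g₂ ∈ hbV μ :=
        memLp_top_of_bound g₂.aestronglyMeasurable C₂ (ae_of_all _ hC₂)
      have heq : (⟨⇑(g₁ + g₂), hg⟩ : ↥(hbV μ)) = ⟨⇑g₁, hg₁⟩ + ⟨⇑g₂, hg₂⟩ :=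
        Subtype.ext (by funext z; show (g₁ + g₂) z = g₁ z + g₂ z; simp)
      rw [heq, hΦadd, ih₁ hg₁, ih₂ hg₂,
        ← integral_add (hmulint ⟨⇑g₁, hg₁⟩) (hmulint ⟨⇑g₂, hg₂⟩)]
      congr 1
      funext z
      rw [MeasureTheory.SimpleFunc.coe_add]
      simp
      ring
  -- main approximation
  refine ⟨h, hint, fun x => ?_⟩
  show Φ x = ∫ z, (x : ℂ → ℂ) z * h z ∂μ
  obtain ⟨C, hC0, hCb⟩ := hbMemtop_bound (hbV_mem x.2)
  have hxm : AEMeasurable (x : ℂ → ℂ) μ := (hbV_mem x.2).aestronglyMeasurable.aemeasurable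
  set x₀ := hxm.mk _ with hx₀def
  have hx₀meas : Measurable x₀ := hxm.measurable_mk
  have hx₀ae : (x : ℂ → ℂ) =ᵐ[μ] x₀ := hxm.ae_eq_mk
  set T : Set ℂ := {z | ‖x₀ z‖ ≤ C} with hTdef
  have hT : MeasurableSet T := measurableSet_le hx₀meas.norm measurable_const
  set x' : ℂ → ℂ := T.indicator x₀ with hx'def
  have hx'meas : Measurable x' := hx₀meas.indicator hT
  have hx'b : ∀ z, ‖x' z‖ ≤ C := by
    intro z
    by_cases hz : z ∈ T
    · rw [hx'def, Set.indicator_of_mem hz]; exact hz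
    · rw [hx'def, Set.indicator_of_notMem hz]; simpa using hC0
  have hx'ae : (x : ℂ → ℂ) =ᵐ[μ] x' := by
    filter_upwards [hx₀ae, hCb] with z h1 h2
    have hzT : z ∈ T := by
      show ‖x₀ z‖ ≤ C
      rw [← h1]; exact h2
    rw [h1, hx'def, Set.indicator_of_mem hzT]
  set x'' : ↥(hbV μ) := ⟨x', memLp_top_of_bound hx'meas.aestronglyMeasurable C (ae_of_all _ hx'b)⟩
    with hx''def
  have hΦxx : Φ x = Φ x'' := by
    have hz : N.α ((x - x'' : ↥(hbV μ)) : ℂ → ℂ) = 0 := by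
      apply hbAlpha_ae_zero N
      have hcoe : ((x - x'' : ↥(hbV μ)) : ℂ → ℂ) = (x : ℂ → ℂ) - x' := rfl
      rw [hcoe]
      filter_upwards [hx'ae] with z hz
      simp [Pi.sub_apply, hz]
    have hb := hΦabs (x - x'')
    rw [hz] at hb
    simp only [ENNReal.toReal_zero, mul_zero] at hb
    have h0 : Φ (x - x'') = 0 := by
      have := norm_nonneg (Φ (x - x''))
      have habs : ‖Φ (x - x'')‖ = 0 := le_antisymm hb this
      exact norm_eq_zero.mp habs
    rw [hΦsub] at h0
    exact sub_eq_zero.mp h0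
  have hIeq : ∫ z, (x : ℂ → ℂ) z * h z ∂μ = ∫ z, x' z * h z ∂μ :=
    integral_congr_ae (by filter_upwards [hx'ae] with z hz; rw [hz])
  rw [hΦxx, hIeq]
  -- approximating simple functions
  set s : ℕ → SimpleFunc ℂ ℂ :=
    fun n => SimpleFunc.approxOn x' hx'meas Set.univ 0 (Set.mem_univ 0) n with hsdef
  have hsb : ∀ n z, ‖s n z - x' z‖ ≤ C := by
    intro n z
    have he := SimpleFunc.edist_approxOn_le hx'meas (Set.mem_univ (0 : ℂ)) z n
    rw [edist_dist, edist_dist] at he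
    have hd : dist (s n z) (x' z) ≤ dist (0 : ℂ) (x' z) :=
      (ENNReal.ofReal_le_ofReal_iff dist_nonneg).mp he
    rw [dist_eq_norm] at hd
    calc ‖s n z - x' z‖ ≤ dist (0 : ℂ) (x' z) := hd
      _ = ‖x' z‖ := by rw [dist_zero_left]
      _ ≤ C := hx'b z
  have hsnorm : ∀ n z, ‖s n z‖ ≤ C + C := by
    intro n z
    calc ‖s n z‖ = ‖(s n z - x' z) + x' z‖ := by ring_nf
      _ ≤ ‖s n z - x' z‖ + ‖x' z‖ := norm_add_le _ _
      _ ≤ C + C := add_le_add (hsb n z) (hx'b z)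
  have hslim : ∀ z, Tendsto (fun n => s n z) atTop (𝓝 (x' z)) := by
    intro z
    exact SimpleFunc.tendsto_approxOn hx'meas (Set.mem_univ 0) (by simp)
  have hsV : ∀ n, ⇑(s n) ∈ hbV μ := fun n =>
    memLp_top_of_bound (s n).aestronglyMeasurable (C + C) (ae_of_all _ (hsnorm n))
  -- convergence of integrals
  have hInt : Tendsto (fun n => ∫ z, s n z * h z ∂μ) atTop (𝓝 (∫ z, x' z * h z ∂μ)) := by
    apply tendsto_integral_of_dominated_convergence (fun z => (C + C) * ‖h z‖)
    · exact fun n => ((s n).aestronglyMeasurable.mul hint.1)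
    · exact hint.norm.const_mul _
    · intro n
      refine ae_of_all _ fun z => ?_
      rw [norm_mul]
      exact mul_le_mul_of_nonneg_right (hsnorm n z) (norm_nonneg _)
    · exact ae_of_all _ fun z => (hslim z).mul tendsto_const_nhds
  -- Egorov: α of the differences tends to 0
  have hαtend : Tendsto (fun n => N.α (⇑(s n) - x')) atTop (𝓝 0) := by
    rw [ENNReal.tendsto_atTop_zero]
    intro ε hε
    set ε₁ := min (ε / 2) 1 with hε₁def
    have hε₁pos : 0 < ε₁ := lt_min (ENNReal.div_pos hε.ne' ENNReal.ofNat_ne_top) zero_lt_one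
    have hε₁top : ε₁ ≠ ⊤ := ne_top_of_le_ne_top ENNReal.one_ne_top (min_le_right _ _)
    have hden0 : (ENNReal.ofReal C + 1) ≠ 0 := by simp
    have hdent : (ENNReal.ofReal C + 1) ≠ ⊤ := by simp [ENNReal.ofReal_ne_top]
    obtain ⟨δ, hδpos, hδ⟩ := hN (ε₁ / (ENNReal.ofReal C + 1))
      (ENNReal.div_pos hε₁pos.ne' hdent)
    set δ' := min δ 1 with hδ'def
    have hδ'pos : 0 < δ' := lt_min hδpos zero_lt_one
    have hδ'top : δ' ≠ ⊤ := ne_top_of_le_ne_top ENNReal.one_ne_top (min_le_right _ _)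
    set r := (δ' / 2).toReal with hrdef
    have hr : 0 < r := by
      apply ENNReal.toReal_pos
      · simp only [ne_eq, ENNReal.div_eq_zero_iff]
        push_neg
        exact ⟨hδ'pos.ne', ENNReal.ofNat_ne_top⟩
      · exact (ENNReal.div_lt_top hδ'top (by norm_num)).ne
    obtain ⟨t, htm, htμ, htu⟩ := MeasureTheory.tendstoUniformlyOn_of_ae_tendsto' (μ := μ)
      (fun n => (s n).stronglyMeasurable) hx'meas.stronglyMeasurable
      (ae_of_all _ hslim) hr
    have htμ' : μ t < δ := by
      have h1 : ENNReal.ofReal r = δ' / 2 := ENNReal.ofReal_toReal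
        (ENNReal.div_lt_top hδ'top (by norm_num)).ne
      calc μ t ≤ ENNReal.ofReal r := htμ
        _ = δ' / 2 := h1
        _ < δ' := ENNReal.half_lt_self hδ'pos.ne' hδ'top
        _ ≤ δ := min_le_left _ _
    have hα_t : N.α (t.indicator fun _ => (1:ℂ)) < ε₁ / (ENNReal.ofReal C + 1) := hδ t htm htμ'
    have hεr : (0 : ℝ) < ε₁.toReal := ENNReal.toReal_pos hε₁pos.ne' hε₁top
    rw [Metric.tendstoUniformlyOn_iff] at htu
    have hev := htu ε₁.toReal hεr
    rw [eventually_atTop] at hev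
    obtain ⟨n₀, hn₀⟩ := hev
    refine ⟨n₀, fun n hn => ?_⟩
    -- split along t
    have hsplit : (⇑(s n) - x') = t.indicator (⇑(s n) - x') + tᶜ.indicator (⇑(s n) - x') :=
      (Set.indicator_self_add_compl t _).symm
    have hDmeas : Measurable (⇑(s n) - x') := (s n).measurable.sub hx'meas
    have hα1 : N.α (t.indicator (⇑(s n) - x')) ≤ ε₁ := by
      have hmono := hbAlpha_mono N (u := t.indicator (⇑(s n) - x'))
        (w := fun z => (C : ℂ) * t.indicator (fun _ => (1:ℂ)) z)
        (hDmeas.indicator htm).aemeasurable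
        ((measurable_const.indicator htm).const_mul _).aemeasurable
        (ae_of_all _ fun z => ?_)
      · calc N.α (t.indicator (⇑(s n) - x')) ≤ N.α (fun z => (C : ℂ) * t.indicator (fun _ => (1:ℂ)) z) := hmono
          _ = (‖(C : ℂ)‖₊ : ℝ≥0∞) * N.α (t.indicator (fun _ => (1:ℂ))) := N.smul_eq _ _
          _ ≤ ENNReal.ofReal C * (ε₁ / (ENNReal.ofReal C + 1)) := by
              apply mul_le_mul' _ hα_t.le
              rw [← enorm_eq_nnnorm, ← ofReal_norm, Complex.norm_real, Real.norm_of_nonneg hC0]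
          _ ≤ (ENNReal.ofReal C + 1) * (ε₁ / (ENNReal.ofReal C + 1)) := by
              exact mul_le_mul' le_self_add le_rfl
          _ = ε₁ := ENNReal.mul_div_cancel hden0 hdent
      · by_cases hz : z ∈ t
        · simp only [Set.indicator_of_mem hz, mul_one]
          rw [Complex.norm_real,
            Real.norm_of_nonneg hC0]
          exact hsb n z
        · simp [Set.indicator_of_notMem hz]
    have hα2 : N.α (tᶜ.indicator (⇑(s n) - x')) ≤ ε₁ := by
      have hb2 : ∀ᵐ z ∂μ, ‖tᶜ.indicator (⇑(s n) - x') z‖ ≤ ε₁.toReal := by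
        refine ae_of_all _ fun z => ?_
        by_cases hz : z ∈ tᶜ
        · rw [Set.indicator_of_mem hz]
          have := hn₀ n hn z hz
          rw [dist_comm, dist_eq_norm] at this
          exact this.le
        · rw [Set.indicator_of_notMem hz]
          simpa using hεr.le
      have := hbAlpha_le_const N (hDmeas.indicator htm.compl).aemeasurable hεr.le hb2
      rwa [ENNReal.ofReal_toReal hε₁top] at this
    calc N.α (⇑(s n) - x')
        = N.α (t.indicator (⇑(s n) - x') + tᶜ.indicator (⇑(s n) - x')) := by rw [← hsplit]
      _ ≤ N.α (t.indicator (⇑(s n) - x')) + N.α (tᶜ.indicator (⇑(s n) - x')) := N.add_le _ _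
      _ ≤ ε₁ + ε₁ := add_le_add hα1 hα2
      _ ≤ ε / 2 + ε / 2 := add_le_add (min_le_left _ _) (min_le_left _ _)
      _ = ε := ENNReal.add_halves ε
  -- conclude
  have hΦlim : Tendsto (fun n => ∫ z, s n z * h z ∂μ) atTop (𝓝 (Φ x'')) := by
    have heqn : ∀ n, ∫ z, s n z * h z ∂μ = Φ ⟨⇑(s n), hsV n⟩ :=
      fun n => (hsimple (s n) (hsV n)).symm
    simp only [heqn]
    rw [tendsto_iff_norm_sub_tendsto_zero]
    have hbound : ∀ n, ‖Φ ⟨⇑(s n), hsV n⟩ - Φ x''‖ ≤ K * (N.α (⇑(s n) - x')).toReal := by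
      intro n
      rw [← hΦsub]
      have hcoe : ((⟨⇑(s n), hsV n⟩ - x'' : ↥(hbV μ)) : ℂ → ℂ) = ⇑(s n) - x' := rfl
      have := hΦabs (⟨⇑(s n), hsV n⟩ - x'')
      rw [hcoe] at this
      exact this
    apply squeeze_zero (fun n => norm_nonneg _) hbound
    have htoReal : Tendsto (fun n => (N.α (⇑(s n) - x')).toReal) atTop (𝓝 0) := by
      have := (ENNReal.tendsto_toReal (a := 0) (by simp)).comp hαtend
      exact this
    have := htoReal.const_mul K
    simpa using this
  exact tendsto_nhds_unique hΦlim hInt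

end AuxHB

set_option maxHeartbeats 2000000 in
/-- Lemma 3.9: if `M` is a closed subspace of `H^α`, then
`M ∩ H^∞` is weak*-closed in `H^∞`. -/
theorem inter_Hinf_weakstar_closed (μ : Measure ℂ) (hμ : OnCircle μ)
    (N : GaugeNorm μ) (hN : N.IsContinuous)
    (M : Set (ℂ → ℂ)) (hM : IsClosedSubspace N M) :
    WeakStarClosedIn μ (M ∩ {g | MemHinf μ g}) := by
  classical
  haveI : IsProbabilityMeasure μ := hμ.1
  intro f hf hfw
  -- Step 1: f ∈ H^∞
  have hfH : MemHinf μ f := by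
    refine ⟨hf, fun n hn => ?_⟩
    by_contra hne
    have hpos : 0 < ‖∫ z, f z * z ^ n ∂μ‖ := norm_pos_iff.2 hne
    obtain ⟨g, hg, hgi⟩ := hfw _ hpos 1 (fun _ => fun z => z ^ n)
      (fun _ => hbIntegrable_pow hμ n)
    have h0 := hgi 0
    have hsplit : ∫ z, (f z - g z) * z ^ n ∂μ = ∫ z, f z * z ^ n ∂μ := by
      calc ∫ z, (f z - g z) * z ^ n ∂μ = ∫ z, (f z * z ^ n - g z * z ^ n) ∂μ := by
            congr 1; funext z; ring
        _ = (∫ z, f z * z ^ n ∂μ) - ∫ z, g z * z ^ n ∂μ :=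
            integral_sub (hbMul_integrable hf (hbIntegrable_pow hμ n))
              (hbMul_integrable hg.2.1 (hbIntegrable_pow hμ n))
        _ = ∫ z, f z * z ^ n ∂μ := by rw [hg.2.2 n hn, sub_zero]
    rw [hsplit] at h0
    exact lt_irrefl _ h0
  -- Step 2: f ∈ H^α
  have hfA : f ∈ Halpha N := by
    refine ⟨hf.aestronglyMeasurable.aemeasurable, ?_⟩
    intro ε hε
    refine ⟨f, hfH, ?_⟩
    have hzz : f - f = (fun _ => (0 : ℂ)) := by funext z; simp
    rw [hzz, hbAlpha_zero N]
    exact hε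
  -- Step 3: f ∈ M
  have hfMfinal : f ∈ M := by
    by_contra hfM
    have hna : f ∉ aClosure N M := fun hmem => hfM (hM.2.2 f hfA hmem)
    have hsep0 : ∃ ε : ℝ≥0∞, 0 < ε ∧ ∀ g ∈ M, ε ≤ N.α (f - g) := by
      by_contra hcon
      push_neg at hcon
      apply hna
      intro ε hε
      obtain ⟨g, hg, hlt⟩ := hcon ε hε
      exact ⟨g, hg, hlt⟩
    obtain ⟨ε₀, hε₀pos, hε₀⟩ := hsep0
    set ε₁ := min ε₀ 1 with hε₁def
    have hε₁pos : 0 < ε₁ := lt_min hε₀pos zero_lt_one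
    have hε₁top : ε₁ ≠ ⊤ := ne_top_of_le_ne_top ENNReal.one_ne_top (min_le_right _ _)
    set e := ε₁.toReal with hedef
    have he : 0 < e := ENNReal.toReal_pos hε₁pos.ne' hε₁top
    have hsep : ∀ g ∈ M, ENNReal.ofReal e ≤ N.α (f - g) := by
      intro g hg
      rw [hedef, ENNReal.ofReal_toReal hε₁top]
      exact le_trans (min_le_left _ _) (hε₀ g hg)
    -- the subspace C = M ∩ H^∞ inside hbV
    set Csub : Submodule ℝ ↥(hbV μ) :=
      { carrier := {x | ((x : ℂ → ℂ)) ∈ M ∧ MemHinf μ (x : ℂ → ℂ)}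
        add_mem' := by
          rintro a b ⟨haM, haH⟩ ⟨hbM, hbH⟩
          exact ⟨hM.1.2.1 _ haM _ hbM, hbMemHinf_add hμ haH hbH⟩
        zero_mem' := ⟨hM.1.1, hbMemHinf_zero⟩
        smul_mem' := by
          rintro r x ⟨hxM, hxH⟩
          have hcoe : ((r • x : ↥(hbV μ)) : ℂ → ℂ) = fun z => ((r : ℝ) : ℂ) * (x : ℂ → ℂ) z := by
            funext z
            show r • (x : ℂ → ℂ) z = _
            rw [Complex.real_smul]
          constructor
          · show ((r • x : ↥(hbV μ)) : ℂ → ℂ) ∈ M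
            rw [hcoe]
            exact hM.1.2.2 _ _ hxM
          · show MemHinf μ ((r • x : ↥(hbV μ)) : ℂ → ℂ)
            rw [hcoe]
            exact hbMemHinf_const_mul hxH _ } with hCsubdef
    set fV : ↥(hbV μ) := ⟨f, hf⟩ with hfVdef
    have hfC : fV ∉ Csub := fun hc => hfM hc.1
    set ψ₁ : ↥(hbV μ) →ₗ.[ℝ] ℝ := { domain := Csub, toFun := 0 } with hψ₁def
    have hfC' : fV ∉ ψ₁.domain := hfC
    set ψ₂ := ψ₁.supSpanSingleton fV 2 hfC' with hψ₂def
    have hfI : hbIV μ fV ∉ ψ₂.domain := by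
      intro hmem
      rw [hψ₂def, LinearPMap.domain_supSpanSingleton] at hmem
      obtain ⟨u, hu, v, hv, huv⟩ := Submodule.mem_sup.1 hmem
      obtain ⟨a, rfl⟩ := Submodule.mem_span_singleton.1 hv
      have hcoe : ((u : ↥(hbV μ)) : ℂ → ℂ) = fun z => (Complex.I - (a : ℂ)) * f z := by
        funext z
        have h1 := congrArg (fun (w : ↥(hbV μ)) => ((w : ↥(hbV μ)) : ℂ → ℂ) z) huv
        have h2 : (u : ℂ → ℂ) z + a • (f z) = Complex.I * f z := h1
        rw [Complex.real_smul] at h2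
        have h3 : (u : ℂ → ℂ) z = Complex.I * f z - (a : ℂ) * f z := by linear_combination h2
        rw [h3]; ring
      have hMu : (fun z => (Complex.I - (a : ℂ)) * f z) ∈ M := hcoe ▸ hu.1
      have hne : (Complex.I - (a : ℂ)) ≠ 0 := by
        intro h0
        have h1 := congrArg Complex.im h0
        simp at h1
      have hfInM : f ∈ M := by
        have h2 := hM.1.2.2 (Complex.I - (a : ℂ))⁻¹ _ hMu
        have h3 : (fun z => (Complex.I - (a : ℂ))⁻¹ * ((Complex.I - (a : ℂ)) * f z)) = f := by
          funext z; rw [← mul_assoc, inv_mul_cancel₀ hne, one_mul]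
        rwa [h3] at h2
      exact hfM hfInM
    set ψ₃ := ψ₂.supSpanSingleton (hbIV μ fV) 0 hfI with hψ₃def
    -- the sublinear functional
    set Nf : ↥(hbV μ) → ℝ := fun x => (2 / e) * (N.α (x : ℂ → ℂ)).toReal with hNfdef
    have hNf_nonneg : ∀ x, 0 ≤ Nf x :=
      fun x => mul_nonneg (by positivity) ENNReal.toReal_nonneg
    have hNf_hom : ∀ c : ℝ, 0 < c → ∀ x, Nf (c • x) = c * Nf x := by
      intro c hc x
      have hcoe : ((c • x : ↥(hbV μ)) : ℂ → ℂ) = fun z => ((c : ℝ) : ℂ) * (x : ℂ → ℂ) z := by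
        funext z
        show c • (x : ℂ → ℂ) z = _
        rw [Complex.real_smul]
      show (2 / e) * (N.α ((c • x : ↥(hbV μ)) : ℂ → ℂ)).toReal = c * ((2 / e) * (N.α (x : ℂ → ℂ)).toReal)
      rw [hcoe, N.smul_eq, ENNReal.toReal_mul, ENNReal.coe_toReal, coe_nnnorm,
        Complex.norm_real, Real.norm_of_nonneg hc.le]
      ring
    have hNf_add : ∀ x y, Nf (x + y) ≤ Nf x + Nf y := by
      intro x y
      have hfx := (N.finite_on_bdd _ (hbV_mem x.2)).ne
      have hfy := (N.finite_on_bdd _ (hbV_mem y.2)).ne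
      have h3 : N.α (((x + y : ↥(hbV μ)) : ℂ → ℂ)) ≤ N.α (x : ℂ → ℂ) + N.α (y : ℂ → ℂ) :=
        N.add_le _ _
      have h2 : (N.α (((x + y : ↥(hbV μ)) : ℂ → ℂ))).toReal
          ≤ (N.α (x : ℂ → ℂ)).toReal + (N.α (y : ℂ → ℂ)).toReal := by
        calc (N.α (((x + y : ↥(hbV μ)) : ℂ → ℂ))).toReal
            ≤ (N.α (x : ℂ → ℂ) + N.α (y : ℂ → ℂ)).toReal :=
              ENNReal.toReal_mono (by rw [ENNReal.add_ne_top]; exact ⟨hfx, hfy⟩) h3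
          _ = _ := ENNReal.toReal_add hfx hfy
      show (2 / e) * (N.α (((x + y : ↥(hbV μ)) : ℂ → ℂ))).toReal ≤ _
      have h4 : (0:ℝ) ≤ 2 / e := by positivity
      calc (2 / e) * (N.α (((x + y : ↥(hbV μ)) : ℂ → ℂ))).toReal
          ≤ (2 / e) * ((N.α (x : ℂ → ℂ)).toReal + (N.α (y : ℂ → ℂ)).toReal) :=
            mul_le_mul_of_nonneg_left h2 h4
        _ = Nf x + Nf y := by rw [hNfdef]; ring
    -- evaluation helpers
    have hval : ∀ (u : ↥(hbV μ)) (hu : u ∈ ψ₂.domain) (b : ℝ)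
        (hmem : u + b • (hbIV μ fV) ∈ ψ₃.domain),
        ψ₃ ⟨u + b • (hbIV μ fV), hmem⟩ = ψ₂ ⟨u, hu⟩ := by
      intro u hu b hmem
      have h1 := LinearPMap.supSpanSingleton_apply_mk ψ₂ (hbIV μ fV) 0 hfI u hu b
      simp at h1
      exact h1
    have hval₂ : ∀ (g : ↥(hbV μ)) (hg : g ∈ Csub) (a : ℝ)
        (hmem : g + a • fV ∈ ψ₂.domain),
        ψ₂ ⟨g + a • fV, hmem⟩ = a * 2 := by
      intro g hg a hmem
      have h1 := LinearPMap.supSpanSingleton_apply_mk ψ₁ fV 2 hfC' g hg a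
      have h2 : ψ₁ ⟨g, hg⟩ = 0 := rfl
      rw [h2, zero_add, smul_eq_mul] at h1
      exact h1
    -- the bound on ψ₃
    have hbound : ∀ x : ↥ψ₃.domain, ψ₃ x ≤ Nf ↑x := by
      intro x
      have hx3 : (x : ↥(hbV μ)) ∈ ψ₂.domain ⊔ (Submodule.span ℝ {hbIV μ fV}) := x.2
      obtain ⟨u, hu, v, hv, huv⟩ := Submodule.mem_sup.1 hx3
      obtain ⟨b, rfl⟩ := Submodule.mem_span_singleton.1 hv
      have hu2 : u ∈ Csub ⊔ (Submodule.span ℝ {fV}) := hu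
      obtain ⟨g, hg, w, hw, hgw⟩ := Submodule.mem_sup.1 hu2
      obtain ⟨a, rfl⟩ := Submodule.mem_span_singleton.1 hw
      have hxval : (x : ↥(hbV μ)) = u + b • (hbIV μ fV) := huv.symm
      have hψx : ψ₃ x = ψ₂ ⟨u, hu⟩ := by
        rw [show x = ⟨u + b • (hbIV μ fV), hxval ▸ x.2⟩ from Subtype.ext hxval]
        exact hval u hu b _
      have hψu : ψ₂ ⟨u, hu⟩ = a * 2 := by
        rw [show (⟨u, hu⟩ : ↥ψ₂.domain) = ⟨g + a • fV, hgw ▸ hu⟩ from Subtype.ext hgw.symm]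
        exact hval₂ g hg a _
      set c : ℂ := (a : ℂ) + (b : ℂ) * Complex.I with hcdef
      have hcoeX : ((x : ↥(hbV μ)) : ℂ → ℂ) = fun z => (g : ℂ → ℂ) z + c * f z := by
        rw [hxval, ← hgw]
        funext z
        show (g : ℂ → ℂ) z + a • ((fV : ℂ → ℂ) z) + b • (Complex.I * (fV : ℂ → ℂ) z) = _
        rw [Complex.real_smul, Complex.real_smul, hcdef]
        show (g : ℂ → ℂ) z + (a : ℂ) * f z + (b : ℂ) * (Complex.I * f z) = _
        ring
      rcases eq_or_ne c 0 with hc0 | hc0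
      · have ha0 : a = 0 := by
          have h5 := congrArg Complex.re hc0
          simpa [hcdef] using h5
        rw [hψx, hψu, ha0]
        simpa using hNf_nonneg ↑x
      · have hainv : a ≤ ‖c‖ := by
          have h1 : c.re = a := by simp [hcdef]
          rw [← h1]; exact Complex.re_le_norm c
        have hgM : (fun z => (-(c⁻¹)) * (g : ℂ → ℂ) z) ∈ M := hM.1.2.2 _ _ hg.1
        have hαlow : ENNReal.ofReal e ≤ N.α (fun z => c⁻¹ * (g : ℂ → ℂ) z + f z) := by
          have h6 := hsep _ hgM
          have heq : f - (fun z => (-(c⁻¹)) * (g : ℂ → ℂ) z)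
              = fun z => c⁻¹ * (g : ℂ → ℂ) z + f z := by
            funext z
            show f z - (-(c⁻¹)) * (g : ℂ → ℂ) z = _
            ring
          rwa [heq] at h6
        have hαx : N.α ((x : ↥(hbV μ)) : ℂ → ℂ)
            = (‖c‖₊ : ℝ≥0∞) * N.α (fun z => c⁻¹ * (g : ℂ → ℂ) z + f z) := by
          rw [hcoeX, ← N.smul_eq]
          congr 1
          funext z
          rw [mul_add, ← mul_assoc, mul_inv_cancel₀ hc0, one_mul]
        have hfinx : N.α ((x : ↥(hbV μ)) : ℂ → ℂ) ≠ ⊤ :=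
          (N.finite_on_bdd _ (hbV_mem (x : ↥(hbV μ)).2)).ne
        have hlow2 : (‖c‖₊ : ℝ≥0∞) * ENNReal.ofReal e ≤ N.α ((x : ↥(hbV μ)) : ℂ → ℂ) := by
          rw [hαx]; exact mul_le_mul' le_rfl hαlow
        have hlow3 : ‖c‖ * e ≤ (N.α ((x : ↥(hbV μ)) : ℂ → ℂ)).toReal := by
          have h7 := ENNReal.toReal_mono hfinx hlow2
          rwa [ENNReal.toReal_mul, ENNReal.coe_toReal, coe_nnnorm,
            ENNReal.toReal_ofReal he.le] at h7
        rw [hψx, hψu]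
        have h8 : a * 2 ≤ ‖c‖ * 2 := by
          exact mul_le_mul_of_nonneg_right hainv (by norm_num)
        have h9 : (2 / e) * (‖c‖ * e) = ‖c‖ * 2 := by
          rw [mul_comm (‖c‖) e, ← mul_assoc, div_mul_cancel₀ 2 he.ne', mul_comm]
        calc a * 2 ≤ ‖c‖ * 2 := h8
          _ = (2 / e) * (‖c‖ * e) := h9.symm
          _ ≤ (2 / e) * (N.α ((x : ↥(hbV μ)) : ℂ → ℂ)).toReal :=
              mul_le_mul_of_nonneg_left hlow3 (by positivity)
          _ = Nf ↑x := rfl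
    -- Hahn–Banach extension
    obtain ⟨ψ, hψeq, hψle⟩ := exists_extension_of_le_sublinear ψ₃ Nf hNf_hom hNf_add hbound
    have hNfneg : ∀ x : ↥(hbV μ), Nf (-x) = Nf x := by
      intro x
      have hcoe : ((-x : ↥(hbV μ)) : ℂ → ℂ) = fun z => (-1 : ℂ) * (x : ℂ → ℂ) z := by
        funext z
        show -((x : ℂ → ℂ) z) = _
        ring
      show (2 / e) * (N.α ((-x : ↥(hbV μ)) : ℂ → ℂ)).toReal = _
      rw [hcoe, N.smul_eq]
      simp
      rfl
    have hψabs : ∀ x : ↥(hbV μ), |ψ x| ≤ Nf x := by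
      intro x
      rw [abs_le]
      refine ⟨?_, hψle x⟩
      have h1 := hψle (-x)
      rw [map_neg, hNfneg] at h1
      linarith
    -- domain memberships and values
    have hfV_dom2 : fV ∈ ψ₂.domain := by
      rw [hψ₂def, LinearPMap.domain_supSpanSingleton]
      exact Submodule.mem_sup_right (Submodule.mem_span_singleton_self _)
    have hdom2of : ∀ (u : ↥(hbV μ)), u ∈ ψ₂.domain → u ∈ ψ₃.domain := by
      intro u hu
      rw [hψ₃def, LinearPMap.domain_supSpanSingleton]
      exact Submodule.mem_sup_left hu
    have hCsub_dom2 : ∀ (u : ↥(hbV μ)), u ∈ Csub → u ∈ ψ₂.domain := by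
      intro u hu
      rw [hψ₂def, LinearPMap.domain_supSpanSingleton]
      exact Submodule.mem_sup_left hu
    have hψ₃val : ∀ (u : ↥(hbV μ)) (hu : u ∈ ψ₂.domain), ψ u = ψ₂ ⟨u, hu⟩ := by
      intro u hu
      have h1 := hψeq ⟨u, hdom2of u hu⟩
      have h3 : u = u + (0 : ℝ) • (hbIV μ fV) := by simp
      have h2 : ψ₃ ⟨u, hdom2of u hu⟩ = ψ₂ ⟨u, hu⟩ := by
        rw [show (⟨u, hdom2of u hu⟩ : ↥ψ₃.domain)
          = ⟨u + (0 : ℝ) • (hbIV μ fV), h3 ▸ hdom2of u hu⟩ from Subtype.ext h3]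
        exact hval u hu 0 _
      rw [← h2]
      exact h1
    have hψC : ∀ (g : ↥(hbV μ)), g ∈ Csub → ψ g = 0 := by
      intro g hg
      rw [hψ₃val g (hCsub_dom2 g hg)]
      have h5 : g = g + (0 : ℝ) • fV := by simp
      rw [show (⟨g, hCsub_dom2 g hg⟩ : ↥ψ₂.domain)
        = ⟨g + (0 : ℝ) • fV, h5 ▸ hCsub_dom2 g hg⟩ from Subtype.ext h5]
      rw [hval₂ g hg 0 _]
      ring
    have hψfV : ψ fV = 2 := by
      rw [hψ₃val fV hfV_dom2]
      have h5 : fV = (0 : ↥(hbV μ)) + (1 : ℝ) • fV := by simp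
      rw [show (⟨fV, hfV_dom2⟩ : ↥ψ₂.domain)
        = ⟨(0 : ↥(hbV μ)) + (1 : ℝ) • fV, h5 ▸ hfV_dom2⟩ from Subtype.ext h5]
      rw [hval₂ 0 Csub.zero_mem 1 _]
      ring
    have hψIfV : ψ (hbIV μ fV) = 0 := by
      have hmem3 : hbIV μ fV ∈ ψ₃.domain := by
        rw [hψ₃def, LinearPMap.domain_supSpanSingleton]
        exact Submodule.mem_sup_right (Submodule.mem_span_singleton_self _)
      have h1 := hψeq ⟨hbIV μ fV, hmem3⟩
      have h3 : hbIV μ fV = (0 : ↥(hbV μ)) + (1 : ℝ) • (hbIV μ fV) := by simp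
      have h0dom : (0 : ↥(hbV μ)) ∈ ψ₂.domain := hCsub_dom2 0 Csub.zero_mem
      have h2 : ψ₃ ⟨hbIV μ fV, hmem3⟩ = ψ₂ ⟨0, h0dom⟩ := by
        rw [show (⟨hbIV μ fV, hmem3⟩ : ↥ψ₃.domain)
          = ⟨(0 : ↥(hbV μ)) + (1 : ℝ) • (hbIV μ fV), h3 ▸ hmem3⟩ from Subtype.ext h3]
        exact hval 0 h0dom 1 _
      have h4 : ψ₂ ⟨0, h0dom⟩ = 0 := by
        have h5 : (0 : ↥(hbV μ)) = 0 + (0 : ℝ) • fV := by simp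
        rw [show (⟨0, h0dom⟩ : ↥ψ₂.domain)
          = ⟨(0 : ↥(hbV μ)) + (0 : ℝ) • fV, h5 ▸ h0dom⟩ from Subtype.ext h5]
        rw [hval₂ 0 Csub.zero_mem 0 _]
        ring
      rw [h1, h2, h4]
    -- representation by an L¹ function
    obtain ⟨hrep, hrepInt, hrepEq⟩ := hbExists_repr μ N hN (2 / e) (by positivity) ψ hψabs
    -- apply the weak-star hypothesis
    obtain ⟨g, hgC, hgi⟩ := hfw 1 one_pos 1 (fun _ => hrep) (fun _ => hrepInt)
    have h0 := hgi 0
    set gV : ↥(hbV μ) := ⟨g, hgC.2.1⟩ with hgVdef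
    have hgCsub : gV ∈ Csub := ⟨hgC.1, hgC.2⟩
    have hIVg : hbIV μ gV ∈ Csub := by
      constructor
      · exact hM.1.2.2 Complex.I g hgC.1
      · exact hbMemHinf_const_mul hgC.2 Complex.I
    have hcomp : ∫ z, (f z - g z) * hrep z ∂μ = 2 := by
      have h1 := hrepEq (fV - gV)
      have h2 : ψ (fV - gV) = 2 := by
        rw [map_sub, hψfV, hψC gV hgCsub]
        ring
      have h3 : ψ (hbIV μ (fV - gV)) = 0 := by
        rw [map_sub, map_sub, hψIfV, hψC _ hIVg]
        ring
      have h4 : (fun z => (f z - g z) * hrep z)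
          = fun z => ((fV - gV : ↥(hbV μ)) : ℂ → ℂ) z * hrep z := rfl
      rw [show (∫ z, (f z - g z) * hrep z ∂μ)
        = ∫ z, ((fV - gV : ↥(hbV μ)) : ℂ → ℂ) z * hrep z ∂μ from by rw [h4]]
      rw [← h1, h2, h3]
      norm_num
    rw [hcomp] at h0
    norm_num at h0
  exact ⟨hfMfinal, hfH⟩
end
end
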